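/- arXiv:2202.08007 — 6 statements merged into one kernel-verified Lean document; each statement's English description precedes it below -/
import Mathlib

section
/- Conditional covariance identity for MTD models: for a stationary MTD model of order d with relevant lag set Λ, any S ⊆ ⟦-d,-1⟧, any k ∉ S and any x_S ∈ A^S with positive probability, Cov_{x_S}(X_0, m_k(X_k)) = Σ_{j∈Λ\S} λ_j Cov_{x_S}(m_j(X_j), m_k(X_k)), where Cov_{x_S} denotes covariance conditional on X_S = x_S. -/
open Finset

/- Conditional covariance identity for MTD models: for a stationary MTD model of
order `d` with relevant lag set `Λ`, any `S ⊆ ⟦-d,-1⟧`, any `k ∉ S` and any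
configuration `x_S` (of positive probability),
`Cov_{x_S}(X_0, m_k(X_k)) = ∑_{j∈Λ\S} λ_j Cov_{x_S}(m_j(X_j), m_k(X_k))`.
Lags are indexed by `Fin d`; the past is distributed according to `π` and the
present symbol `X_0` according to the MTD transition kernel `p`. -/
theorem stmt4 {A : Type*} [Fintype A] [DecidableEq A] [Nonempty A]
    (d : ℕ) (v : A → ℝ)
    (Λ : Finset (Fin d)) (lam0 : ℝ) (lam : Fin d → ℝ)
    (hlam0 : 0 ≤ lam0) (hlam : ∀ j, 0 ≤ lam j)
    (hsum : lam0 + ∑ j ∈ Λ, lam j = 1)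
    (p0 : A → ℝ) (hp0 : ∀ a, 0 ≤ p0 a) (hp0sum : ∑ a, p0 a = 1)
    (pj : Fin d → A → A → ℝ) (hpj : ∀ j a b, 0 ≤ pj j a b)
    (hpjsum : ∀ j b, ∑ a, pj j a b = 1)
    (p : A → (Fin d → A) → ℝ)
    (hp : ∀ a x, p a x = lam0 * p0 a + ∑ j ∈ Λ, lam j * pj j a (x j))
    (π : (Fin d → A) → ℝ) (hπ : ∀ x, 0 < π x) (hπsum : ∑ x, π x = 1)
    (m : Fin d → A → ℝ) (hm : ∀ j b, m j b = ∑ a, v a * pj j a b)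
    (S : Finset (Fin d)) (k : Fin d) (hk : k ∉ S) (xS : Fin d → A)
    -- conditional expectation given `X_S = x_S` of a function of `(X_{-d:-1}, X_0)`
    (cE : ((Fin d → A) → A → ℝ) → ℝ)
    (hcE : ∀ f, cE f =
      (∑ x ∈ Finset.univ.filter (fun x => ∀ i ∈ S, x i = xS i), ∑ a, π x * p a x * f x a) /
      (∑ x ∈ Finset.univ.filter (fun x => ∀ i ∈ S, x i = xS i), π x))
    -- conditional covariance given `X_S = x_S`
    (cCov : ((Fin d → A) → A → ℝ) → ((Fin d → A) → A → ℝ) → ℝ)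
    (hcCov : ∀ f g, cCov f g = cE (fun x a => f x a * g x a) - cE f * cE g) :
    cCov (fun _ a => v a) (fun x _ => m k (x k))
      = ∑ j ∈ Λ \ S, lam j * cCov (fun x _ => m j (x j)) (fun x _ => m k (x k)) := by
  classical
  set F : Finset (Fin d → A) := Finset.univ.filter (fun x => ∀ i ∈ S, x i = xS i) with hF
  obtain ⟨Z, hZ⟩ : ∃ Z : ℝ, Z = ∑ x ∈ F, π x := ⟨_, rfl⟩
  rw [← hZ] at hcE
  have hxS : xS ∈ F := by simp [hF]
  have hZpos : 0 < Z := hZ ▸ Finset.sum_pos (fun x _ => hπ x) ⟨xS, hxS⟩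
  have hZne : Z ≠ 0 := ne_of_gt hZpos
  obtain ⟨M, hM⟩ : ∃ M : ((Fin d → A) → ℝ) → ℝ, ∀ g, M g = ∑ x ∈ F, π x * g x :=
    ⟨_, fun _ => rfl⟩
  obtain ⟨V0, hV0⟩ : ∃ V0 : ℝ, V0 = ∑ a, v a * p0 a := ⟨_, rfl⟩
  -- total mass of the transition kernel
  have hpsum : ∀ x, ∑ a, p a x = 1 := by
    intro x
    simp only [hp]
    rw [Finset.sum_add_distrib, ← Finset.mul_sum, hp0sum, Finset.sum_comm]
    have : ∀ j ∈ Λ, ∑ a, lam j * pj j a (x j) = lam j := by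
      intro j _
      rw [← Finset.mul_sum, hpjsum, mul_one]
    rw [Finset.sum_congr rfl this]
    simpa using hsum
  -- value-weighted mass of the kernel
  have hvsum : ∀ x, ∑ a, v a * p a x = lam0 * V0 + ∑ j ∈ Λ, lam j * m j (x j) := by
    intro x
    simp only [hp, mul_add, Finset.mul_sum, Finset.sum_add_distrib]
    congr 1
    · rw [hV0, Finset.mul_sum]
      exact Finset.sum_congr rfl fun a _ => by ring
    · rw [Finset.sum_comm]
      refine Finset.sum_congr rfl fun j _ => ?_
      rw [hm, Finset.mul_sum]
      exact Finset.sum_congr rfl fun a _ => by ring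
  -- conditional expectation of a function of the past only
  have hE1 : ∀ g : (Fin d → A) → ℝ, cE (fun x _ => g x) = M g / Z := by
    intro g
    rw [hcE, hM]
    congr 1
    refine Finset.sum_congr rfl fun x _ => ?_
    have : ∑ a, π x * p a x * g x = (π x * g x) * ∑ a, p a x := by
      rw [Finset.mul_sum]
      exact Finset.sum_congr rfl fun a _ => by ring
    rw [this, hpsum, mul_one]
  -- conditional expectation of `v · g(x)`
  have hEvg : ∀ g : (Fin d → A) → ℝ, cE (fun x a => v a * g x)
      = (lam0 * V0 * M g + ∑ j ∈ Λ, lam j * M (fun x => m j (x j) * g x)) / Z := by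
    intro g
    rw [hcE]
    congr 1
    have step1 : ∀ x ∈ F, ∑ a, π x * p a x * (v a * g x)
        = lam0 * V0 * (π x * g x) + ∑ j ∈ Λ, lam j * (π x * (m j (x j) * g x)) := by
      intro x _
      have h0 : ∑ a, π x * p a x * (v a * g x) = (π x * g x) * ∑ a, v a * p a x := by
        rw [Finset.mul_sum]
        exact Finset.sum_congr rfl fun a _ => by ring
      rw [h0, hvsum, mul_add]
      congr 1
      · ring
      · rw [Finset.mul_sum]
        exact Finset.sum_congr rfl fun j _ => by ring
    rw [Finset.sum_congr rfl step1, Finset.sum_add_distrib, Finset.sum_comm]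
    congr 1
    · rw [hM, Finset.mul_sum]
    · refine Finset.sum_congr rfl fun j _ => ?_
      rw [hM, Finset.mul_sum]
  -- conditional expectation of `v` alone
  have hEv : cE (fun _ a => v a)
      = (lam0 * V0 * Z + ∑ j ∈ Λ, lam j * M (fun x => m j (x j))) / Z := by
    rw [hcE]
    congr 1
    have step1 : ∀ x ∈ F, ∑ a, π x * p a x * v a
        = lam0 * V0 * π x + ∑ j ∈ Λ, lam j * (π x * m j (x j)) := by
      intro x _
      have h0 : ∑ a, π x * p a x * v a = π x * ∑ a, v a * p a x := by
        rw [Finset.mul_sum]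
        exact Finset.sum_congr rfl fun a _ => by ring
      rw [h0, hvsum, mul_add]
      congr 1
      · ring
      · rw [Finset.mul_sum]
        exact Finset.sum_congr rfl fun j _ => by ring
    rw [Finset.sum_congr rfl step1, Finset.sum_add_distrib, Finset.sum_comm]
    congr 1
    · rw [hZ, Finset.mul_sum]
    · refine Finset.sum_congr rfl fun j _ => ?_
      rw [hM, Finset.mul_sum]
  -- on `F`, the coordinate `j ∈ S` is frozen at `xS j`
  have hfrozen : ∀ j ∈ S, ∀ g : (Fin d → A) → ℝ,
      M (fun x => m j (x j) * g x) = m j (xS j) * M g := by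
    intro j hj g
    rw [hM, hM, Finset.mul_sum]
    refine Finset.sum_congr rfl fun x hx => ?_
    have hxj : x j = xS j := by
      rw [hF] at hx
      simp only [Finset.mem_filter] at hx
      exact hx.2 j hj
    rw [hxj]; ring
  have hM1 : M (fun _ => (1:ℝ)) = Z := by rw [hM, hZ]; simp
  -- expand the covariances
  simp only [hcCov]
  rw [hEvg (fun x => m k (x k)), hEv]
  have hrw : ∀ j : Fin d,
      (cE fun x _ => m j (x j) * m k (x k)) - (cE fun x _ => m j (x j)) * (cE fun x _ => m k (x k))
      = M (fun x => m j (x j) * m k (x k)) / Z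
        - M (fun x => m j (x j)) / Z * (M (fun x => m k (x k)) / Z) := by
    intro j
    rw [hE1 (fun x => m j (x j) * m k (x k)), hE1 (fun x => m j (x j)),
      hE1 (fun x => m k (x k))]
  simp only [hrw]
  rw [hE1 (fun x => m k (x k))]
  -- extend the sum from `Λ \ S` to `Λ`
  have hext : ∑ j ∈ Λ \ S, lam j *
        (M (fun x => m j (x j) * m k (x k)) / Z
          - M (fun x => m j (x j)) / Z * (M (fun x => m k (x k)) / Z))
      = ∑ j ∈ Λ, lam j *
        (M (fun x => m j (x j) * m k (x k)) / Z
          - M (fun x => m j (x j)) / Z * (M (fun x => m k (x k)) / Z)) := by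
    refine Finset.sum_subset Finset.sdiff_subset ?_
    intro j hjΛ hjS
    have hjmem : j ∈ S := by
      by_contra h
      exact hjS (Finset.mem_sdiff.mpr ⟨hjΛ, h⟩)
    have e1 := hfrozen j hjmem (fun x => m k (x k))
    have e2 : M (fun x => m j (x j)) = m j (xS j) * Z := by
      have := hfrozen j hjmem (fun _ => (1:ℝ))
      simpa [hM1] using this
    rw [e1, e2]
    field_simp
    ring
  rw [hext]
  -- now pure algebra
  have hsplit : ∑ j ∈ Λ, lam j *
        (M (fun x => m j (x j) * m k (x k)) / Z
          - M (fun x => m j (x j)) / Z * (M (fun x => m k (x k)) / Z))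
      = (∑ j ∈ Λ, lam j * M (fun x => m j (x j) * m k (x k))) / Z
        - (∑ j ∈ Λ, lam j * M (fun x => m j (x j))) * M (fun x => m k (x k)) / Z ^ 2 := by
    rw [Finset.sum_div, Finset.sum_mul, Finset.sum_div, ← Finset.sum_sub_distrib]
    refine Finset.sum_congr rfl fun j _ => ?_
    field_simp
  rw [hsplit]
  field_simp
  ring
end

section
/- Under full support and non-degenerate conditional averages, the quadratic form of conditional covariances is strictly positive: for any S ⊆ ⟦-d,-1⟧ with Λ ⊄ S, Σ_{j∈Λ\S} Σ_{k∈Λ\S} λ_j λ_k E[Cov_{X_S}(m_j(X_j), m_k(X_k))] > 0. -/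
open Finset

private theorem var_expand {ι : Type*} (s : Finset ι) (w f : ι → ℝ) :
    ∑ x ∈ s, ∑ y ∈ s, w x * w y * (f x - f y)^2 =
    2 * ((∑ x ∈ s, w x * (f x * f x)) * (∑ x ∈ s, w x) - (∑ x ∈ s, w x * f x)^2) := by
  have e1 : (∑ x ∈ s, w x * (f x * f x)) * (∑ x ∈ s, w x)
      = ∑ x ∈ s, ∑ y ∈ s, (w x * (f x * f x)) * w y := Finset.sum_mul_sum _ _ _ _
  have e2 : (∑ x ∈ s, w x * (f x * f x)) * (∑ x ∈ s, w x)
      = ∑ x ∈ s, ∑ y ∈ s, (w y * (f y * f y)) * w x := by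
    rw [e1]; exact Finset.sum_comm
  have e3 : (∑ x ∈ s, w x * f x)^2 = ∑ x ∈ s, ∑ y ∈ s, (w x * f x) * (w y * f y) := by
    rw [sq]; exact Finset.sum_mul_sum _ _ _ _
  calc ∑ x ∈ s, ∑ y ∈ s, w x * w y * (f x - f y)^2
      = ∑ x ∈ s, ∑ y ∈ s, ((w x * (f x * f x)) * w y - (w x * f x) * (w y * f y)
          + ((w y * (f y * f y)) * w x - (w x * f x) * (w y * f y))) := by
        refine Finset.sum_congr rfl fun x _ => Finset.sum_congr rfl fun y _ => ?_; ring
    _ = 2 * ((∑ x ∈ s, w x * (f x * f x)) * (∑ x ∈ s, w x) - (∑ x ∈ s, w x * f x)^2) := by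
        simp only [Finset.sum_add_distrib, Finset.sum_sub_distrib]
        linarith [e1, e2, e3]

theorem stmt5 {A : Type*} [Fintype A] [DecidableEq A] [Nonempty A]
    (d : ℕ) (v : A → ℝ)
    (Λ : Finset (Fin d)) (lam0 : ℝ) (lam : Fin d → ℝ)
    (hlam0 : 0 ≤ lam0) (hlam : ∀ j, 0 ≤ lam j)
    (hlampos : ∀ j ∈ Λ, 0 < lam j)
    (hsum : lam0 + ∑ j ∈ Λ, lam j = 1)
    (p0 : A → ℝ) (hp0 : ∀ a, 0 ≤ p0 a) (hp0sum : ∑ a, p0 a = 1)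
    (pj : Fin d → A → A → ℝ) (hpj : ∀ j a b, 0 ≤ pj j a b)
    (hpjsum : ∀ j b, ∑ a, pj j a b = 1)
    (p : A → (Fin d → A) → ℝ)
    (hp : ∀ a x, p a x = lam0 * p0 a + ∑ j ∈ Λ, lam j * pj j a (x j))
    -- full support of the law of the past
    (π : (Fin d → A) → ℝ) (hπ : ∀ x, 0 < π x) (hπsum : ∑ x, π x = 1)
    (m : Fin d → A → ℝ) (hm : ∀ j b, m j b = ∑ a, v a * pj j a b)
    -- non-degenerate conditional averages
    (hmnondeg : ∀ j ∈ Λ, ∃ b c, m j b ≠ m j c)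
    (S : Finset (Fin d)) (hS : ¬ Λ ⊆ S)
    -- conditional expectation given the `S`-pattern of `y`
    (cE : (Fin d → A) → ((Fin d → A) → A → ℝ) → ℝ)
    (hcE : ∀ y f, cE y f =
      (∑ x ∈ Finset.univ.filter (fun x => ∀ i ∈ S, x i = y i), ∑ a, π x * p a x * f x a) /
      (∑ x ∈ Finset.univ.filter (fun x => ∀ i ∈ S, x i = y i), π x))
    (cCov : (Fin d → A) → ((Fin d → A) → A → ℝ) → ((Fin d → A) → A → ℝ) → ℝ)
    (hcCov : ∀ y f g, cCov y f g = cE y (fun x a => f x a * g x a) - cE y f * cE y g) :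
    0 < ∑ j ∈ Λ \ S, ∑ k ∈ Λ \ S, lam j * lam k *
        (∑ x, π x * cCov x (fun z _ => m j (z j)) (fun z _ => m k (z k))) := by
  classical
  obtain ⟨j0, hj0Λ, hj0S⟩ := Finset.not_subset.mp hS
  obtain ⟨b, c, hbc⟩ := hmnondeg j0 hj0Λ
  -- total transition probability sums to 1
  have hpsum : ∀ x : Fin d → A, ∑ a, p a x = 1 := by
    intro x
    simp only [hp]
    rw [Finset.sum_add_distrib]
    have h1 : ∑ a, lam0 * p0 a = lam0 := by rw [← Finset.mul_sum, hp0sum, mul_one]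
    have h2 : ∑ a : A, ∑ j ∈ Λ, lam j * pj j a (x j) = ∑ j ∈ Λ, lam j := by
      rw [Finset.sum_comm]
      exact Finset.sum_congr rfl fun j _ => by rw [← Finset.mul_sum, hpjsum, mul_one]
    rw [h1, h2, hsum]
  -- the aggregated conditional mean function
  set g : (Fin d → A) → ℝ := fun x => ∑ j ∈ Λ \ S, lam j * m j (x j) with hgdef
  -- conditional expectation of functions not depending on the present symbol
  have hcEc : ∀ (y : Fin d → A) (cst : (Fin d → A) → ℝ),
      cE y (fun z _ => cst z) =
      (∑ x ∈ Finset.univ.filter (fun x => ∀ i ∈ S, x i = y i), π x * cst x) /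
      (∑ x ∈ Finset.univ.filter (fun x => ∀ i ∈ S, x i = y i), π x) := by
    intro y cst
    rw [hcE]
    congr 1
    refine Finset.sum_congr rfl fun x _ => ?_
    have : ∑ a, π x * p a x * cst x = (π x * cst x) * ∑ a, p a x := by
      rw [Finset.mul_sum]; exact Finset.sum_congr rfl fun a _ => by ring
    rw [this, hpsum, mul_one]
  -- positivity of the normalizer
  have hmemy : ∀ y : Fin d → A, y ∈ Finset.univ.filter (fun x => ∀ i ∈ S, x i = y i) := by
    intro y; simp
  have hZpos : ∀ y : Fin d → A,
      0 < ∑ x ∈ Finset.univ.filter (fun x => ∀ i ∈ S, x i = y i), π x := by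
    intro y
    exact Finset.sum_pos (fun x _ => hπ x) ⟨y, hmemy y⟩
  -- per-class algebraic identity for the covariance quadratic form
  have peryy : ∀ y : Fin d → A,
      ∑ j ∈ Λ \ S, ∑ k ∈ Λ \ S, lam j * lam k *
        cCov y (fun z _ => m j (z j)) (fun z _ => m k (z k)) =
      ((∑ x ∈ Finset.univ.filter (fun x => ∀ i ∈ S, x i = y i), π x * (g x * g x)) *
        (∑ x ∈ Finset.univ.filter (fun x => ∀ i ∈ S, x i = y i), π x) -
       (∑ x ∈ Finset.univ.filter (fun x => ∀ i ∈ S, x i = y i), π x * g x)^2) /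
      (∑ x ∈ Finset.univ.filter (fun x => ∀ i ∈ S, x i = y i), π x)^2 := by
    intro y
    set F := Finset.univ.filter (fun x : Fin d → A => ∀ i ∈ S, x i = y i) with hF
    set Z := ∑ x ∈ F, π x with hZ
    have hZne : Z ≠ 0 := ne_of_gt (hZpos y)
    have A1 : ∑ j ∈ Λ \ S, ∑ k ∈ Λ \ S,
        lam j * lam k * (∑ x ∈ F, π x * (m j (x j) * m k (x k))) =
        ∑ x ∈ F, π x * (g x * g x) := by
      have hx : ∀ x : Fin d → A, π x * (g x * g x) =
          ∑ j ∈ Λ \ S, ∑ k ∈ Λ \ S, lam j * lam k * (π x * (m j (x j) * m k (x k))) := by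
        intro x
        rw [hgdef]
        simp only
        rw [Finset.sum_mul_sum, Finset.mul_sum]
        refine Finset.sum_congr rfl fun j _ => ?_
        rw [Finset.mul_sum]
        exact Finset.sum_congr rfl fun k _ => by ring
      calc ∑ j ∈ Λ \ S, ∑ k ∈ Λ \ S,
              lam j * lam k * (∑ x ∈ F, π x * (m j (x j) * m k (x k)))
          = ∑ j ∈ Λ \ S, ∑ k ∈ Λ \ S, ∑ x ∈ F,
              lam j * lam k * (π x * (m j (x j) * m k (x k))) := by
            simp only [Finset.mul_sum]
        _ = ∑ j ∈ Λ \ S, ∑ x ∈ F, ∑ k ∈ Λ \ S,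
              lam j * lam k * (π x * (m j (x j) * m k (x k))) :=
            Finset.sum_congr rfl fun j _ => Finset.sum_comm
        _ = ∑ x ∈ F, ∑ j ∈ Λ \ S, ∑ k ∈ Λ \ S,
              lam j * lam k * (π x * (m j (x j) * m k (x k))) := Finset.sum_comm
        _ = ∑ x ∈ F, π x * (g x * g x) :=
            Finset.sum_congr rfl fun x _ => (hx x).symm
    have A2 : ∑ j ∈ Λ \ S, lam j * (∑ x ∈ F, π x * m j (x j)) = ∑ x ∈ F, π x * g x := by
      have hx : ∀ x : Fin d → A, π x * g x =
          ∑ j ∈ Λ \ S, lam j * (π x * m j (x j)) := by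
        intro x
        rw [hgdef]
        simp only
        rw [Finset.mul_sum]
        exact Finset.sum_congr rfl fun j _ => by ring
      calc ∑ j ∈ Λ \ S, lam j * (∑ x ∈ F, π x * m j (x j))
          = ∑ j ∈ Λ \ S, ∑ x ∈ F, lam j * (π x * m j (x j)) := by
            simp only [Finset.mul_sum]
        _ = ∑ x ∈ F, ∑ j ∈ Λ \ S, lam j * (π x * m j (x j)) := Finset.sum_comm
        _ = ∑ x ∈ F, π x * g x := Finset.sum_congr rfl fun x _ => (hx x).symm
    simp only [hcCov, hcEc, ← hF, ← hZ]
    calc ∑ j ∈ Λ \ S, ∑ k ∈ Λ \ S, lam j * lam k *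
            ((∑ x ∈ F, π x * (m j (x j) * m k (x k))) / Z -
             (∑ x ∈ F, π x * m j (x j)) / Z * ((∑ x ∈ F, π x * m k (x k)) / Z))
        = ∑ j ∈ Λ \ S, ∑ k ∈ Λ \ S,
            ((lam j * lam k * (∑ x ∈ F, π x * (m j (x j) * m k (x k)))) / Z -
             (lam j * (∑ x ∈ F, π x * m j (x j)) / Z) *
             (lam k * (∑ x ∈ F, π x * m k (x k)) / Z)) := by
          refine Finset.sum_congr rfl fun j _ => Finset.sum_congr rfl fun k _ => ?_; ring
      _ = (∑ j ∈ Λ \ S, ∑ k ∈ Λ \ S,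
            lam j * lam k * (∑ x ∈ F, π x * (m j (x j) * m k (x k)))) / Z -
          (∑ j ∈ Λ \ S, lam j * (∑ x ∈ F, π x * m j (x j)) / Z) *
          (∑ k ∈ Λ \ S, lam k * (∑ x ∈ F, π x * m k (x k)) / Z) := by
          simp only [Finset.sum_sub_distrib, Finset.sum_div]
          rw [← Finset.sum_mul_sum]
      _ = (∑ x ∈ F, π x * (g x * g x)) / Z -
          ((∑ x ∈ F, π x * g x) / Z) * ((∑ x ∈ F, π x * g x) / Z) := by
          rw [A1]
          simp only [div_eq_mul_inv, ← Finset.sum_mul]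
          rw [A2]
      _ = ((∑ x ∈ F, π x * (g x * g x)) * Z - (∑ x ∈ F, π x * g x)^2) / Z^2 := by
          field_simp
  -- strict positivity of the per-class variance numerator
  have hvarpos : ∀ y : Fin d → A,
      0 < (∑ x ∈ Finset.univ.filter (fun x => ∀ i ∈ S, x i = y i), π x * (g x * g x)) *
        (∑ x ∈ Finset.univ.filter (fun x => ∀ i ∈ S, x i = y i), π x) -
       (∑ x ∈ Finset.univ.filter (fun x => ∀ i ∈ S, x i = y i), π x * g x)^2 := by
    intro y
    set F := Finset.univ.filter (fun x : Fin d → A => ∀ i ∈ S, x i = y i) with hF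
    set x1 := Function.update y j0 b with hx1def
    set x2 := Function.update y j0 c with hx2def
    have hx1 : x1 ∈ F := by
      simp only [hF, Finset.mem_filter, Finset.mem_univ, true_and]
      intro i hi
      exact Function.update_of_ne (by rintro rfl; exact hj0S hi) _ _
    have hx2 : x2 ∈ F := by
      simp only [hF, Finset.mem_filter, Finset.mem_univ, true_and]
      intro i hi
      exact Function.update_of_ne (by rintro rfl; exact hj0S hi) _ _
    have hj0ΛS : j0 ∈ Λ \ S := Finset.mem_sdiff.mpr ⟨hj0Λ, hj0S⟩
    have hdiff : g x1 - g x2 = lam j0 * (m j0 b - m j0 c) := by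
      rw [hgdef]
      simp only
      rw [← Finset.sum_sub_distrib]
      rw [Finset.sum_eq_single j0]
      · rw [hx1def, hx2def, Function.update_self, Function.update_self]; ring
      · intro j _ hne
        rw [hx1def, hx2def, Function.update_of_ne hne, Function.update_of_ne hne]
        ring
      · intro h; exact absurd hj0ΛS h
    have hgne : g x1 ≠ g x2 := by
      intro h
      rw [h, sub_self] at hdiff
      exact (mul_ne_zero (ne_of_gt (hlampos j0 hj0Λ))
        (sub_ne_zero.mpr hbc)) hdiff.symm
    have hdouble : 0 < ∑ x ∈ F, ∑ x' ∈ F, π x * π x' * (g x - g x')^2 := by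
      refine Finset.sum_pos' (fun x _ => Finset.sum_nonneg fun x' _ => mul_nonneg (mul_nonneg (hπ x).le (hπ x').le) (sq_nonneg _))
        ⟨x1, hx1, ?_⟩
      refine Finset.sum_pos' (fun x' _ => mul_nonneg (mul_nonneg (hπ x1).le (hπ x').le) (sq_nonneg _)) ⟨x2, hx2, ?_⟩
      have h1 : (0:ℝ) < (g x1 - g x2)^2 :=
        lt_of_le_of_ne (sq_nonneg _) (Ne.symm (pow_ne_zero 2 (sub_ne_zero.mpr hgne)))
      exact mul_pos (mul_pos (hπ x1) (hπ x2)) h1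
    have hexp := var_expand F π g
    linarith [hdouble, hexp]
  -- swap the sums and conclude
  have swap : ∑ j ∈ Λ \ S, ∑ k ∈ Λ \ S, lam j * lam k *
        (∑ x, π x * cCov x (fun z _ => m j (z j)) (fun z _ => m k (z k))) =
      ∑ x, π x * ∑ j ∈ Λ \ S, ∑ k ∈ Λ \ S, lam j * lam k *
        cCov x (fun z _ => m j (z j)) (fun z _ => m k (z k)) := by
    calc ∑ j ∈ Λ \ S, ∑ k ∈ Λ \ S, lam j * lam k *
            (∑ x, π x * cCov x (fun z _ => m j (z j)) (fun z _ => m k (z k)))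
        = ∑ j ∈ Λ \ S, ∑ k ∈ Λ \ S, ∑ x, lam j * lam k *
            (π x * cCov x (fun z _ => m j (z j)) (fun z _ => m k (z k))) := by
          simp only [Finset.mul_sum]
      _ = ∑ j ∈ Λ \ S, ∑ x, ∑ k ∈ Λ \ S, lam j * lam k *
            (π x * cCov x (fun z _ => m j (z j)) (fun z _ => m k (z k))) :=
          Finset.sum_congr rfl fun j _ => Finset.sum_comm
      _ = ∑ x, ∑ j ∈ Λ \ S, ∑ k ∈ Λ \ S, lam j * lam k *
            (π x * cCov x (fun z _ => m j (z j)) (fun z _ => m k (z k))) :=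
          Finset.sum_comm
      _ = ∑ x, π x * ∑ j ∈ Λ \ S, ∑ k ∈ Λ \ S, lam j * lam k *
            cCov x (fun z _ => m j (z j)) (fun z _ => m k (z k)) := by
          refine Finset.sum_congr rfl fun x _ => ?_
          rw [Finset.mul_sum]
          refine Finset.sum_congr rfl fun j _ => ?_
          rw [Finset.mul_sum]
          exact Finset.sum_congr rfl fun k _ => by ring
  rw [swap]
  refine Finset.sum_pos (fun x _ => ?_) Finset.univ_nonempty
  refine mul_pos (hπ x) ?_
  rw [peryy x]
  exact div_pos (hvarpos x) (pow_pos (hZpos x) 2)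
end

section
/- For a stationary MTD model, for any lag k ∈ ⟦-d,-1⟧ and subset S ⊆ ⟦-d,-1⟧\{k}, Diam(A)·‖A‖_∞·ν̄_{k,S} ≥ E[|Cov_{X_S}(X_0, X_k)|], where ν̄_{k,S} = E[Σ_{b,c∈A} P_{X_S}(X_k=b) P_{X_S}(X_k=c) d_TV(P_{X_S}(X_0 ∈ ·|X_k=b), P_{X_S}(X_0 ∈ ·|X_k=c))]. -/
open Finset

lemma tv_bound' {A : Type*} [Fintype A] [Nonempty A] (v p q : A → ℝ) (M : ℝ)
    (hM : ∀ a b, |v a - v b| ≤ M)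
    (hpq : ∑ a, p a = ∑ a, q a) :
    |∑ a, (p a - q a) * v a| ≤ M * ((1/2 : ℝ) * ∑ a, |p a - q a|) := by
  classical
  set r := fun a => p a - q a with hr
  have hr0 : ∑ a, r a = 0 := by
    simp only [hr, Finset.sum_sub_distrib, hpq, sub_self]
  set Pos := Finset.univ.filter (fun a => 0 ≤ r a) with hPos
  set Neg := Finset.univ.filter (fun a => ¬ 0 ≤ r a) with hNeg
  have hsplit : ∑ a ∈ Pos, r a + ∑ a ∈ Neg, r a = 0 := by
    rw [hPos, hNeg, Finset.sum_filter_add_sum_filter_not]; exact hr0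
  set P := ∑ a ∈ Pos, r a with hPdef
  have hP0 : 0 ≤ P := Finset.sum_nonneg (fun a ha => by
    rw [hPos] at ha; exact (Finset.mem_filter.mp ha).2)
  have habs : ∑ a, |r a| = 2 * P := by
    rw [← Finset.sum_filter_add_sum_filter_not Finset.univ (fun a => 0 ≤ r a) (fun a => |r a|)]
    have h1 : ∑ a ∈ Pos, |r a| = P :=
      Finset.sum_congr rfl (fun a ha => abs_of_nonneg (Finset.mem_filter.mp ha).2)
    have h2 : ∑ a ∈ Neg, |r a| = - ∑ a ∈ Neg, r a := by
      rw [← Finset.sum_neg_distrib]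
      exact Finset.sum_congr rfl (fun a ha => abs_of_neg (lt_of_not_ge (Finset.mem_filter.mp ha).2))
    rw [← hPos, ← hNeg, h1, h2]; linarith
  set mx := Finset.univ.sup' Finset.univ_nonempty v with hmx
  set mn := Finset.univ.inf' Finset.univ_nonempty v with hmn
  obtain ⟨amax, _, hamax⟩ := Finset.exists_mem_eq_sup' Finset.univ_nonempty v
  obtain ⟨amin, _, hamin⟩ := Finset.exists_mem_eq_inf' Finset.univ_nonempty v
  have hmxmn : mx - mn ≤ M := by
    calc mx - mn = v amax - v amin := by rw [hmx, hmn, ← hamax, ← hamin]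
    _ ≤ |v amax - v amin| := le_abs_self _
    _ ≤ M := hM amax amin
  have hPosNeg : ∑ a, r a * v a = ∑ a ∈ Pos, r a * v a + ∑ a ∈ Neg, r a * v a := by
    rw [hPos, hNeg, Finset.sum_filter_add_sum_filter_not]
  have hub : ∑ a, r a * v a ≤ P * M := by
    have h1 : ∑ a ∈ Pos, r a * v a ≤ P * mx := by
      rw [hPdef, Finset.sum_mul]
      exact Finset.sum_le_sum (fun a ha =>
        mul_le_mul_of_nonneg_left (Finset.le_sup' v (Finset.mem_univ a)) (Finset.mem_filter.mp ha).2)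
    have h2 : ∑ a ∈ Neg, r a * v a ≤ (∑ a ∈ Neg, r a) * mn := by
      rw [Finset.sum_mul]
      exact Finset.sum_le_sum (fun a ha =>
        mul_le_mul_of_nonpos_left (Finset.inf'_le v (Finset.mem_univ a))
          (le_of_lt (lt_of_not_ge (Finset.mem_filter.mp ha).2)))
    have h3 : ∑ a ∈ Neg, r a = -P := by rw [hPdef]; linarith
    rw [hPosNeg]
    calc ∑ a ∈ Pos, r a * v a + ∑ a ∈ Neg, r a * v a ≤ P * mx + (-P) * mn := by
          rw [← h3]; linarith
    _ = P * (mx - mn) := by ring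
    _ ≤ P * M := mul_le_mul_of_nonneg_left hmxmn hP0
  have hlb : -(P * M) ≤ ∑ a, r a * v a := by
    have h1 : P * mn ≤ ∑ a ∈ Pos, r a * v a := by
      rw [hPdef, Finset.sum_mul]
      exact Finset.sum_le_sum (fun a ha =>
        mul_le_mul_of_nonneg_left (Finset.inf'_le v (Finset.mem_univ a)) (Finset.mem_filter.mp ha).2)
    have h2 : (∑ a ∈ Neg, r a) * mx ≤ ∑ a ∈ Neg, r a * v a := by
      rw [Finset.sum_mul]
      exact Finset.sum_le_sum (fun a ha =>
        mul_le_mul_of_nonpos_left (Finset.le_sup' v (Finset.mem_univ a))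
          (le_of_lt (lt_of_not_ge (Finset.mem_filter.mp ha).2)))
    have h3 : ∑ a ∈ Neg, r a = -P := by rw [hPdef]; linarith
    rw [hPosNeg]
    have h5 : P * mn + (-P) * mx ≤ ∑ a ∈ Pos, r a * v a + ∑ a ∈ Neg, r a * v a := by
      rw [← h3] at *; linarith
    have h4 : -(P * M) ≤ P * mn + (-P) * mx := by nlinarith
    linarith
  have hfin : M * ((1/2 : ℝ) * ∑ a, |r a|) = P * M := by rw [habs]; ring
  rw [hfin]
  exact abs_le.mpr ⟨hlb, hub⟩

/- For a stationary process on a finite real alphabet, for any lag `k` and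
subset `S` of lags with `k ∉ S`:
`Diam(A)·‖A‖_∞·ν̄_{k,S} ≥ E[|Cov_{X_S}(X_0, X_k)|]`, where
`ν̄_{k,S} = E[∑_{b,c} P_{X_S}(X_k=b) P_{X_S}(X_k=c) d_TV(P_{X_S}(X_0∈·|X_k=b), P_{X_S}(X_0∈·|X_k=c))]`.
The joint law of the past `X_{-d:-1}` and present `X_0` is given by `W`, and the
alphabet symbols have real values `v`. -/
theorem stmt9 {A : Type*} [Fintype A] [DecidableEq A] [Nonempty A]
    (d : ℕ) (v : A → ℝ)
    (W : (Fin d → A) → A → ℝ) (hW : ∀ x a, 0 < W x a)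
    (hWsum : ∑ x, ∑ a, W x a = 1)
    (π : (Fin d → A) → ℝ) (hπ : ∀ x, π x = ∑ a, W x a)
    (S : Finset (Fin d)) (k : Fin d) (hk : k ∉ S)
    -- conditional probability that `X_k = b` given the `S`-pattern of `y`
    (Pk : (Fin d → A) → A → ℝ)
    (hPk : ∀ y b, Pk y b =
      (∑ x ∈ Finset.univ.filter (fun x => (∀ i ∈ S, x i = y i) ∧ x k = b), π x) /
      (∑ x ∈ Finset.univ.filter (fun x => ∀ i ∈ S, x i = y i), π x))
    -- conditional law of `X_0` given the `S`-pattern of `y` and `X_k = b`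
    (law : (Fin d → A) → A → A → ℝ)
    (hlaw : ∀ y b a, law y b a =
      (∑ x ∈ Finset.univ.filter (fun x => (∀ i ∈ S, x i = y i) ∧ x k = b), W x a) /
      (∑ x ∈ Finset.univ.filter (fun x => (∀ i ∈ S, x i = y i) ∧ x k = b), π x))
    -- conditional influence measure ν
    (ν : (Fin d → A) → ℝ)
    (hν : ∀ y, ν y = ∑ b, ∑ c, Pk y b * Pk y c *
      ((1/2 : ℝ) * ∑ a, |law y b a - law y c a|))
    -- conditional expectation and covariance given the `S`-pattern of `y`
    (cE : (Fin d → A) → ((Fin d → A) → A → ℝ) → ℝ)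
    (hcE : ∀ y f, cE y f =
      (∑ x ∈ Finset.univ.filter (fun x => ∀ i ∈ S, x i = y i), ∑ a, W x a * f x a) /
      (∑ x ∈ Finset.univ.filter (fun x => ∀ i ∈ S, x i = y i), π x))
    (cCov : (Fin d → A) → ((Fin d → A) → A → ℝ) → ((Fin d → A) → A → ℝ) → ℝ)
    (hcCov : ∀ y f g, cCov y f g = cE y (fun x a => f x a * g x a) - cE y f * cE y g) :
    ∑ x, π x * |cCov x (fun _ a => v a) (fun z _ => v (z k))|
      ≤ ((Finset.univ : Finset (A × A)).sup' Finset.univ_nonempty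
            (fun ab => |v ab.1 - v ab.2|)) *
        (Finset.univ.sup' Finset.univ_nonempty (fun a => |v a|)) *
        (∑ x, π x * ν x) := by
  classical
  set Diam := ((Finset.univ : Finset (A × A)).sup' Finset.univ_nonempty
      (fun ab => |v ab.1 - v ab.2|)) with hDiamDef
  set Sup := (Finset.univ.sup' Finset.univ_nonempty (fun a => |v a|)) with hSupDef
  have hDiamLe : ∀ a b : A, |v a - v b| ≤ Diam := fun a b =>
    Finset.le_sup' (fun ab : A × A => |v ab.1 - v ab.2|) (Finset.mem_univ (a, b))
  have hSupLe : ∀ a : A, |v a| ≤ Sup := fun a =>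
    Finset.le_sup' (fun a => |v a|) (Finset.mem_univ a)
  have hSup0 : 0 ≤ Sup := le_trans (abs_nonneg _) (hSupLe (Classical.arbitrary A))
  have hπpos : ∀ x, 0 < π x := fun x => by
    rw [hπ]; exact Finset.sum_pos (fun a _ => hW x a) Finset.univ_nonempty
  have key : ∀ y, |cCov y (fun _ a => v a) (fun z _ => v (z k))| ≤ Diam * Sup * ν y := by
    intro y
    set D := ∑ x ∈ Finset.univ.filter (fun x : Fin d → A => ∀ i ∈ S, x i = y i), π x with hDdef
    set N := fun b => ∑ x ∈ Finset.univ.filter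
        (fun x : Fin d → A => (∀ i ∈ S, x i = y i) ∧ x k = b), π x with hNdef
    set Mw := fun b a => ∑ x ∈ Finset.univ.filter
        (fun x : Fin d → A => (∀ i ∈ S, x i = y i) ∧ x k = b), W x a with hMwdef
    have hDpos : 0 < D := by
      rw [hDdef]
      exact Finset.sum_pos (fun x _ => hπpos x)
        ⟨y, Finset.mem_filter.mpr ⟨Finset.mem_univ y, fun i _ => rfl⟩⟩
    have hNpos : ∀ b, 0 < N b := by
      intro b
      rw [hNdef]
      refine Finset.sum_pos (fun x _ => hπpos x) ⟨Function.update y k b,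
        Finset.mem_filter.mpr ⟨Finset.mem_univ _, ⟨fun i hi => ?_, Function.update_self _ _ _⟩⟩⟩
      exact Function.update_of_ne (fun hik => hk (by rwa [hik] at hi)) _ _
    have fib : ∀ f : (Fin d → A) → ℝ,
        ∑ b, ∑ x ∈ Finset.univ.filter
            (fun x : Fin d → A => (∀ i ∈ S, x i = y i) ∧ x k = b), f x
          = ∑ x ∈ Finset.univ.filter (fun x : Fin d → A => ∀ i ∈ S, x i = y i), f x := by
      intro f
      rw [← Finset.sum_fiberwise
        (Finset.univ.filter (fun x : Fin d → A => ∀ i ∈ S, x i = y i)) (fun x => x k) f]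
      exact Finset.sum_congr rfl (fun b _ => by rw [Finset.filter_filter])
    have hp : ∀ b, Pk y b = N b / D := by
      intro b; rw [hPk]
    have hNsum : ∑ b, N b = D := by simp only [hNdef, hDdef]; exact fib π
    have hpsum : ∑ b, Pk y b = 1 := by
      simp only [hp]; rw [← Finset.sum_div, hNsum, div_self hDpos.ne']
    have hp0 : ∀ b, 0 ≤ Pk y b := fun b => by
      rw [hp]; exact div_nonneg (hNpos b).le hDpos.le
    have hL : ∀ b a, law y b a = Mw b a / N b := by
      intro b a; rw [hlaw]
    have hMwsum : ∀ b, ∑ a, Mw b a = N b := by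
      intro b
      simp only [hMwdef, hNdef]
      rw [Finset.sum_comm]
      exact Finset.sum_congr rfl (fun x _ => (hπ x).symm)
    have hLsum : ∀ b, ∑ a, law y b a = 1 := by
      intro b
      simp only [hL]
      rw [← Finset.sum_div, hMwsum b, div_self (hNpos b).ne']
    set E := fun b => ∑ a, law y b a * v a with hEdef
    have hEeq : ∀ b, E b = (∑ a, Mw b a * v a) / N b := by
      intro b
      simp only [hEdef, hL, div_mul_eq_mul_div]
      rw [← Finset.sum_div]
    clear_value E
    -- first identity
    have h1 : cE y (fun _ a => v a) = ∑ b, Pk y b * E b := by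
      rw [hcE]
      have rterm : ∀ b, Pk y b * E b = (∑ a, Mw b a * v a) / D := by
        intro b
        have hbne := (hNpos b).ne'
        have hdne := hDpos.ne'
        rw [hp b, hEeq b]
        field_simp
      rw [Finset.sum_congr rfl (fun b _ => rterm b), ← Finset.sum_div, ← hDdef]
      congr 1
      rw [← fib (fun x => ∑ a, W x a * v a)]
      refine Finset.sum_congr rfl (fun b _ => ?_)
      rw [Finset.sum_comm]
      exact Finset.sum_congr rfl (fun a _ => by rw [hMwdef, Finset.sum_mul])
    -- second identity
    have h2 : cE y (fun z _ => v (z k)) = ∑ b, Pk y b * v b := by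
      rw [hcE]
      have num : ∑ x ∈ Finset.univ.filter (fun x : Fin d → A => ∀ i ∈ S, x i = y i),
          ∑ a, W x a * v (x k) = ∑ b, N b * v b := by
        have hx : ∀ x : Fin d → A, ∑ a, W x a * v (x k) = π x * v (x k) := fun x => by
          rw [hπ, Finset.sum_mul]
        rw [Finset.sum_congr rfl (fun x _ => hx x), ← fib (fun x => π x * v (x k))]
        refine Finset.sum_congr rfl (fun b _ => ?_)
        rw [hNdef, Finset.sum_mul]
        refine Finset.sum_congr rfl (fun x hxm => ?_)
        rw [(Finset.mem_filter.mp hxm).2.2]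
      rw [num, ← hDdef, Finset.sum_div]
      exact Finset.sum_congr rfl (fun b _ => by rw [hp b, div_mul_eq_mul_div])
    -- third identity
    have h3 : cE y (fun x a => v a * v (x k)) = ∑ b, Pk y b * (v b * E b) := by
      rw [hcE]
      have rterm : ∀ b, Pk y b * (v b * E b) = (∑ a, Mw b a * v a) * v b / D := by
        intro b
        have hbne := (hNpos b).ne'
        have hdne := hDpos.ne'
        rw [hp b, hEeq b]
        field_simp
      rw [Finset.sum_congr rfl (fun b _ => rterm b), ← Finset.sum_div, ← hDdef]
      congr 1
      rw [← fib (fun x => ∑ a, W x a * (v a * v (x k)))]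
      refine Finset.sum_congr rfl (fun b _ => ?_)
      have step : ∑ x ∈ Finset.univ.filter
          (fun x : Fin d → A => (∀ i ∈ S, x i = y i) ∧ x k = b),
          ∑ a, W x a * (v a * v (x k))
          = ∑ x ∈ Finset.univ.filter
          (fun x : Fin d → A => (∀ i ∈ S, x i = y i) ∧ x k = b),
          ∑ a, W x a * v a * v b := by
        refine Finset.sum_congr rfl (fun x hxm => ?_)
        refine Finset.sum_congr rfl (fun a _ => ?_)
        rw [(Finset.mem_filter.mp hxm).2.2]; ring
      rw [step, Finset.sum_comm, Finset.sum_mul]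
      refine Finset.sum_congr rfl (fun a _ => ?_)
      rw [hMwdef, Finset.sum_mul, Finset.sum_mul]
    have hcov : cCov y (fun _ a => v a) (fun z _ => v (z k))
        = ∑ b, Pk y b * (v b * E b) - (∑ b, Pk y b * E b) * (∑ b, Pk y b * v b) := by
      rw [hcCov, h1, h2, h3]
    have hcov2 : cCov y (fun _ a => v a) (fun z _ => v (z k))
        = ∑ b, ∑ c, Pk y b * Pk y c * (v b * (E b - E c)) := by
      have inner : ∀ b, ∑ c, Pk y b * Pk y c * (v b * (E b - E c))
          = Pk y b * (v b * E b) * (∑ c, Pk y c) - Pk y b * v b * (∑ c, Pk y c * E c) := by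
        intro b
        rw [Finset.mul_sum, Finset.mul_sum, ← Finset.sum_sub_distrib]
        exact Finset.sum_congr rfl (fun c _ => by ring)
      have expand : ∑ b, ∑ c, Pk y b * Pk y c * (v b * (E b - E c))
          = (∑ b, Pk y b * (v b * E b)) * (∑ c, Pk y c)
            - (∑ b, Pk y b * v b) * (∑ c, Pk y c * E c) := by
        rw [Finset.sum_congr rfl (fun b _ => inner b), Finset.sum_sub_distrib,
          Finset.sum_mul, Finset.sum_mul]
      rw [hcov, expand, hpsum, mul_one]
      ring
    have step : ∀ b c, |Pk y b * Pk y c * (v b * (E b - E c))|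
        ≤ Diam * Sup * (Pk y b * Pk y c * ((1/2 : ℝ) * ∑ a, |law y b a - law y c a|)) := by
      intro b c
      have hEdiff : E b - E c = ∑ a, (law y b a - law y c a) * v a := by
        simp only [hEdef]
        rw [← Finset.sum_sub_distrib]
        exact Finset.sum_congr rfl (fun a _ => by ring)
      have htv : |E b - E c| ≤ Diam * ((1/2 : ℝ) * ∑ a, |law y b a - law y c a|) := by
        rw [hEdiff]
        exact tv_bound' v _ _ Diam hDiamLe (by rw [hLsum b, hLsum c])
      have habs : |Pk y b * Pk y c * (v b * (E b - E c))|
          = Pk y b * Pk y c * (|v b| * |E b - E c|) := by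
        rw [abs_mul, abs_mul, abs_mul, abs_of_nonneg (hp0 b), abs_of_nonneg (hp0 c)]
      rw [habs]
      calc Pk y b * Pk y c * (|v b| * |E b - E c|)
          ≤ Pk y b * Pk y c * (Sup * (Diam * ((1/2 : ℝ) * ∑ a, |law y b a - law y c a|))) := by
            refine mul_le_mul_of_nonneg_left ?_ (mul_nonneg (hp0 b) (hp0 c))
            exact mul_le_mul (hSupLe b) htv (abs_nonneg _) hSup0
        _ = Diam * Sup * (Pk y b * Pk y c * ((1/2 : ℝ) * ∑ a, |law y b a - law y c a|)) := by
            ring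
    rw [hcov2, hν]
    calc |∑ b, ∑ c, Pk y b * Pk y c * (v b * (E b - E c))|
        ≤ ∑ b, |∑ c, Pk y b * Pk y c * (v b * (E b - E c))| :=
          Finset.abs_sum_le_sum_abs _ _
      _ ≤ ∑ b, ∑ c, |Pk y b * Pk y c * (v b * (E b - E c))| :=
          Finset.sum_le_sum (fun b _ => Finset.abs_sum_le_sum_abs _ _)
      _ ≤ ∑ b, ∑ c, Diam * Sup *
            (Pk y b * Pk y c * ((1/2 : ℝ) * ∑ a, |law y b a - law y c a|)) :=
          Finset.sum_le_sum (fun b _ => Finset.sum_le_sum (fun c _ => step b c))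
      _ = Diam * Sup * ∑ b, ∑ c,
            Pk y b * Pk y c * ((1/2 : ℝ) * ∑ a, |law y b a - law y c a|) := by
          simp only [Finset.mul_sum]
  calc ∑ x, π x * |cCov x (fun _ a => v a) (fun z _ => v (z k))|
      ≤ ∑ x, π x * (Diam * Sup * ν x) :=
        Finset.sum_le_sum (fun x _ => mul_le_mul_of_nonneg_left (key x) (hπpos x).le)
    _ = Diam * Sup * ∑ x, π x * ν x := by
        rw [Finset.mul_sum]
        exact Finset.sum_congr rfl (fun x _ => by ring)
end

section
/- Exponential supermartingale for bounded-increment martingales: for the martingale H•M^a with |H_t| ≤ b, and any λ > 0, the process exp(λ H•M^a_t − ((e^{λb} − λb − 1)/b²) ⟨H•M^a⟩_t) is a supermartingale starting from 1. -/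
open MeasureTheory Real Finset

lemma exp_tsum (x : ℝ) : Real.exp x = ∑' n : ℕ, x ^ n / (n.factorial : ℝ) := by
  rw [Real.exp_eq_exp_ℝ, NormedSpace.exp_eq_tsum_div]

lemma exp_shift (x : ℝ) :
    ∑' n : ℕ, x ^ (n + 2) / ((n + 2).factorial : ℝ) = Real.exp x - 1 - x := by
  have hs := Real.summable_pow_div_factorial x
  have h1 : Summable (fun n : ℕ => x ^ (n + 1) / ((n + 1).factorial : ℝ)) :=
    hs.comp_injective (add_left_injective 1)
  rw [exp_tsum x, Summable.tsum_eq_zero_add hs, Summable.tsum_eq_zero_add h1]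
  simp [Nat.factorial]

lemma exp_le_quad_nonpos {y : ℝ} (hy : y ≤ 0) : Real.exp y ≤ 1 + y + y ^ 2 / 2 := by
  set g : ℝ → ℝ := fun x => 1 + x + x ^ 2 / 2 - Real.exp x with hg
  have hd : ∀ x, HasDerivAt g (1 + x - Real.exp x) x := by
    intro x
    have : HasDerivAt g (0 + 1 + (↑2 * x ^ (2 - 1)) / 2 - Real.exp x) x :=
      ((((hasDerivAt_const x (1:ℝ)).add (hasDerivAt_id x)).add
        ((hasDerivAt_pow 2 x).div_const 2)).sub (Real.hasDerivAt_exp x))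
    convert this using 1; push_cast; ring
  have hmono : AntitoneOn g (Set.Iic (0:ℝ)) := by
    apply antitoneOn_of_deriv_nonpos (convex_Iic 0)
    · exact Continuous.continuousOn (by fun_prop)
    · intro x hx; exact ((hd x).differentiableAt).differentiableWithinAt
    · intro x hx
      rw [(hd x).deriv]
      linarith [Real.add_one_le_exp x]
  have := hmono (Set.mem_Iic.2 hy) (Set.mem_Iic.2 le_rfl) hy
  simp [hg, Real.exp_zero] at this ⊢
  linarith

lemma freedman {c y : ℝ} (hc : 0 < c) (hy : y ≤ c) :
    Real.exp y ≤ 1 + y + (Real.exp c - c - 1) / c ^ 2 * y ^ 2 := by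
  have hK : c ^ 2 / 2 ≤ Real.exp c - c - 1 := by
    have := Real.quadratic_le_exp_of_nonneg hc.le; linarith
  rcases le_or_gt y 0 with h0 | h0
  · have h1 := exp_le_quad_nonpos h0
    have h2 : y ^ 2 / 2 ≤ (Real.exp c - c - 1) / c ^ 2 * y ^ 2 := by
      rw [div_mul_eq_mul_div, le_div_iff₀ (by positivity)]
      nlinarith [sq_nonneg y]
    linarith
  · have hs : Summable (fun n : ℕ => y ^ (n + 2) / ((n + 2).factorial : ℝ)) :=
      (Real.summable_pow_div_factorial y).comp_injective (add_left_injective 2)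
    have hsc : Summable (fun n : ℕ =>
        (y ^ 2 / c ^ 2) * (c ^ (n + 2) / ((n + 2).factorial : ℝ))) :=
      ((Real.summable_pow_div_factorial c).comp_injective (add_left_injective 2)).mul_left _
    have hterm : ∀ n : ℕ, y ^ (n + 2) / ((n + 2).factorial : ℝ)
        ≤ (y ^ 2 / c ^ 2) * (c ^ (n + 2) / ((n + 2).factorial : ℝ)) := by
      intro n
      have hfact : (0:ℝ) < ((n + 2).factorial : ℝ) := by positivity
      have h1 : y ^ n ≤ c ^ n := pow_le_pow_left₀ h0.le hy n
      have key : y ^ (n + 2) ≤ (y ^ 2 / c ^ 2) * c ^ (n + 2) := by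
        have hc2 : (y ^ 2 / c ^ 2) * c ^ (n + 2) = y ^ 2 * c ^ n := by
          field_simp; ring
        rw [hc2, pow_add]
        nlinarith [sq_nonneg y]
      rw [div_le_iff₀ hfact, mul_assoc, div_mul_cancel₀ _ (ne_of_gt hfact)]
      exact key
    have hle := Summable.tsum_le_tsum hterm hs hsc
    rw [exp_shift y] at hle
    rw [tsum_mul_left, exp_shift c] at hle
    have : (Real.exp c - c - 1) / c ^ 2 * y ^ 2
        = y ^ 2 / c ^ 2 * (Real.exp c - 1 - c) := by ring
    linarith [this ▸ hle]

lemma bernoulli_mgf {b l h q : ℝ} (hb : 0 < b) (hl : 0 < l) (hh : |h| ≤ b)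
    (hq0 : 0 ≤ q) (hq1 : q ≤ 1) :
    Real.exp (-(l * h * q)) * (1 + (Real.exp (l * h) - 1) * q)
      ≤ Real.exp ((Real.exp (l * b) - l * b - 1) / b ^ 2 * (h ^ 2 * q * (1 - q))) := by
  obtain ⟨hh1, hh2⟩ := abs_le.1 hh
  have hc : 0 < l * b := mul_pos hl hb
  set K := (Real.exp (l * b) - l * b - 1) / (l * b) ^ 2 with hK
  have hy0 : l * h * (0 - q) ≤ l * b := by
    nlinarith [mul_nonneg (mul_nonneg hl.le (show (0:ℝ) ≤ b + h by linarith)) hq0,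
      mul_le_mul_of_nonneg_left hq1 hc.le]
  have hy1 : l * h * (1 - q) ≤ l * b := by
    nlinarith [mul_nonneg (mul_nonneg hl.le (show (0:ℝ) ≤ b - h by linarith))
      (show (0:ℝ) ≤ 1 - q by linarith), mul_le_mul_of_nonneg_left hq1 hc.le]
  have f0 := freedman hc hy0
  have f1 := freedman hc hy1
  rw [← hK] at f0 f1
  have e0 : (1 - q) * Real.exp (l * h * (0 - q))
      ≤ (1 - q) * (1 + l * h * (0 - q) + K * (l * h * (0 - q)) ^ 2) :=
    mul_le_mul_of_nonneg_left f0 (by linarith)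
  have e1 : q * Real.exp (l * h * (1 - q))
      ≤ q * (1 + l * h * (1 - q) + K * (l * h * (1 - q)) ^ 2) :=
    mul_le_mul_of_nonneg_left f1 hq0
  have hsum : (1 - q) * (1 + l * h * (0 - q) + K * (l * h * (0 - q)) ^ 2)
      + q * (1 + l * h * (1 - q) + K * (l * h * (1 - q)) ^ 2)
      = 1 + K * l ^ 2 * (h ^ 2 * q * (1 - q)) := by ring
  have hKl : K * l ^ 2 = (Real.exp (l * b) - l * b - 1) / b ^ 2 := by
    rw [hK]; field_simp
  have hlhs : Real.exp (-(l * h * q)) * (1 + (Real.exp (l * h) - 1) * q)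
      = (1 - q) * Real.exp (l * h * (0 - q)) + q * Real.exp (l * h * (1 - q)) := by
    rw [show l * h * (1 - q) = l * h + -(l * h * q) by ring, Real.exp_add,
      show l * h * (0 - q) = -(l * h * q) by ring]
    ring
  rw [hlhs]
  calc (1 - q) * Real.exp (l * h * (0 - q)) + q * Real.exp (l * h * (1 - q))
      ≤ 1 + K * l ^ 2 * (h ^ 2 * q * (1 - q)) := by rw [← hsum]; linarith
    _ ≤ Real.exp (K * l ^ 2 * (h ^ 2 * q * (1 - q))) := by
        linarith [Real.add_one_le_exp (K * l ^ 2 * (h ^ 2 * q * (1 - q)))]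
    _ = _ := by rw [hKl]
theorem stmt13 {Ω : Type*} {m0 : MeasurableSpace Ω} (μ : Measure Ω)
    [IsProbabilityMeasure μ] (ℱ : Filtration ℕ m0)
    {A : Type*} [Fintype A] [DecidableEq A]
    (d : ℕ) (X : ℕ → Ω → A)
    (hX : ∀ t a, StronglyMeasurable[ℱ t] (fun ω => (if X t ω = a then (1 : ℝ) else 0)))
    (p : A → (Fin d → A) → ℝ)
    (hp01 : ∀ a x, 0 ≤ p a x ∧ p a x ≤ 1)
    (hpsum : ∀ x, ∑ a, p a x = 1)
    (hMarkov : ∀ s, d ≤ s → ∀ a,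
      μ[fun ω => (if X s ω = a then (1 : ℝ) else 0) | ℱ (s - 1)]
        =ᵐ[μ] fun ω => p a (fun i => X (s - d + i) ω))
    (b : ℝ) (hb : 0 < b) (H : ℕ → Ω → ℝ)
    (hHmeas : ∀ s, StronglyMeasurable[ℱ (s - 1)] (H s))
    (hHbdd : ∀ s ω, |H s ω| ≤ b)
    (hH0 : ∀ s ≤ d, ∀ ω, H s ω = 0)
    (a : A)
    (M : ℕ → Ω → ℝ)
    (hM : ∀ t ω, M t ω = ∑ s ∈ Finset.range (t + 1),
      H s ω * ((if X s ω = a then (1 : ℝ) else 0) - p a (fun i => X (s - d + i) ω)))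
    (QV : ℕ → Ω → ℝ)
    (hQV : ∀ t ω, QV t ω = ∑ s ∈ Finset.range (t + 1),
      H s ω ^ 2 * p a (fun i => X (s - d + i) ω) * (1 - p a (fun i => X (s - d + i) ω)))
    (l : ℝ) (hl : 0 < l) :
    Supermartingale
      (fun t ω => Real.exp (l * M t ω - ((Real.exp (l * b) - l * b - 1) / b ^ 2) * QV t ω))
      ℱ μ ∧
    ∀ ω, Real.exp (l * M 0 ω - ((Real.exp (l * b) - l * b - 1) / b ^ 2) * QV 0 ω) = 1 := by
  set φ := (Real.exp (l * b) - l * b - 1) / b ^ 2 with hφ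
  set Z : ℕ → Ω → ℝ := fun t ω => Real.exp (l * M t ω - φ * QV t ω) with hZ
  have hφ0 : 0 ≤ φ := by
    rw [hφ]
    apply div_nonneg _ (by positivity)
    linarith [Real.add_one_le_exp (l * b)]
  -- measurability of the conditional probability map
  have hgmeas : ∀ s, d ≤ s →
      StronglyMeasurable[ℱ (s - 1)] (fun ω => p a (fun i => X (s - d + i) ω)) := by
    intro s hds
    have heq : (fun ω => p a (fun i => X (s - d + i) ω)) = fun ω =>
        ∑ x : Fin d → A, (∏ i : Fin d, if X (s - d + (i:ℕ)) ω = x i then (1:ℝ) else 0) * p a x := by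
      funext ω
      rw [Finset.sum_eq_single (fun i : Fin d => X (s - d + (i:ℕ)) ω)]
      · simp
      · intro x _ hx
        obtain ⟨i, hi⟩ : ∃ i : Fin d, X (s - d + (i:ℕ)) ω ≠ x i := by
          by_contra hcon; push_neg at hcon
          exact hx (funext fun i => (hcon i)).symm
        rw [Finset.prod_eq_zero (Finset.mem_univ i) (by simp [hi]), zero_mul]
      · intro hmem; exact absurd (Finset.mem_univ _) hmem
    rw [heq]
    apply Finset.stronglyMeasurable_fun_sum
    intro x _
    apply StronglyMeasurable.mul _ stronglyMeasurable_const
    apply Finset.stronglyMeasurable_fun_prod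
    intro i _
    exact (hX (s - d + (i:ℕ)) (x i)).mono (ℱ.mono (by have hi := i.isLt; omega))
  have hq01 : ∀ s ω, 0 ≤ p a (fun i => X (s - d + i) ω) ∧
      p a (fun i => X (s - d + i) ω) ≤ 1 := fun s ω => hp01 a _
  -- adaptedness of M and QV
  have hMmeas : ∀ t, StronglyMeasurable[ℱ t] (M t) := by
    intro t
    have : M t = fun ω => ∑ s ∈ Finset.range (t + 1),
        H s ω * ((if X s ω = a then (1 : ℝ) else 0) - p a (fun i => X (s - d + i) ω)) := by
      funext ω; exact hM t ω
    rw [this]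
    apply Finset.stronglyMeasurable_fun_sum
    intro s hs
    rw [Finset.mem_range] at hs
    by_cases hsd : s ≤ d
    · have : (fun ω => H s ω * ((if X s ω = a then (1 : ℝ) else 0)
          - p a (fun i => X (s - d + i) ω))) = fun _ => 0 := by
        funext ω; rw [hH0 s hsd ω, zero_mul]
      rw [this]; exact stronglyMeasurable_const
    · push_neg at hsd
      refine StronglyMeasurable.mul ((hHmeas s).mono (ℱ.mono (by omega)))
        (StronglyMeasurable.sub ((hX s a).mono (ℱ.mono (by omega)))
          ((hgmeas s hsd.le).mono (ℱ.mono (by omega))))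
  have hQVmeas : ∀ t, StronglyMeasurable[ℱ t] (QV t) := by
    intro t
    have : QV t = fun ω => ∑ s ∈ Finset.range (t + 1),
        H s ω ^ 2 * p a (fun i => X (s - d + i) ω) * (1 - p a (fun i => X (s - d + i) ω)) := by
      funext ω; exact hQV t ω
    rw [this]
    apply Finset.stronglyMeasurable_fun_sum
    intro s hs
    rw [Finset.mem_range] at hs
    by_cases hsd : s ≤ d
    · have : (fun ω => H s ω ^ 2 * p a (fun i => X (s - d + i) ω)
          * (1 - p a (fun i => X (s - d + i) ω))) = fun _ => 0 := by
        funext ω; rw [hH0 s hsd ω]; ring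
      rw [this]; exact stronglyMeasurable_const
    · push_neg at hsd
      refine StronglyMeasurable.mul (StronglyMeasurable.mul
        (((hHmeas s).mono (ℱ.mono (by omega))).pow 2)
        ((hgmeas s hsd.le).mono (ℱ.mono (by omega))))
        (stronglyMeasurable_const.sub ((hgmeas s hsd.le).mono (ℱ.mono (by omega))))
  have hZadp : StronglyAdapted ℱ Z := by
    intro t
    exact Real.continuous_exp.comp_stronglyMeasurable
      (((hMmeas t).const_mul l).sub ((hQVmeas t).const_mul φ))
  -- bounds
  have hIb : ∀ s ω, |(if X s ω = a then (1:ℝ) else 0) - p a (fun i => X (s - d + i) ω)| ≤ 1 := by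
    intro s ω
    obtain ⟨h1, h2⟩ := hq01 s ω
    rw [abs_le]; split_ifs <;> constructor <;> linarith
  have hMb : ∀ t ω, |M t ω| ≤ (t + 1) * b := by
    intro t ω
    rw [hM t ω]
    calc |∑ s ∈ Finset.range (t + 1), H s ω *
          ((if X s ω = a then (1 : ℝ) else 0) - p a (fun i => X (s - d + i) ω))|
        ≤ ∑ s ∈ Finset.range (t + 1), |H s ω *
          ((if X s ω = a then (1 : ℝ) else 0) - p a (fun i => X (s - d + i) ω))| :=
          Finset.abs_sum_le_sum_abs _ _
      _ ≤ ∑ s ∈ Finset.range (t + 1), b := by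
          apply Finset.sum_le_sum
          intro s _
          rw [abs_mul]
          calc |H s ω| * |_| ≤ b * 1 :=
                mul_le_mul (hHbdd s ω) (hIb s ω) (abs_nonneg _) hb.le
            _ = b := mul_one b
      _ = (t + 1) * b := by rw [Finset.sum_const, Finset.card_range]; push_cast; ring
  have hQV0 : ∀ t ω, 0 ≤ QV t ω := by
    intro t ω
    rw [hQV t ω]
    apply Finset.sum_nonneg
    intro s _
    obtain ⟨h1, h2⟩ := hq01 s ω
    obtain h3 := sq_nonneg (H s ω)
    exact mul_nonneg (mul_nonneg h3 h1) (by linarith)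
  have hZbd : ∀ t ω, Z t ω ≤ Real.exp (l * ((t + 1) * b)) := by
    intro t ω
    apply Real.exp_le_exp.2
    have h1 := hMb t ω
    have h2 := hQV0 t ω
    have h3 : l * M t ω ≤ l * ((t + 1) * b) :=
      mul_le_mul_of_nonneg_left (le_trans (le_abs_self _) h1) hl.le
    nlinarith [mul_nonneg hφ0 h2]
  have hZint : ∀ t, Integrable (Z t) μ := by
    intro t
    refine ⟨((hZadp t).mono (ℱ.le t)).aestronglyMeasurable, ?_⟩
    apply HasFiniteIntegral.of_bounded (C := Real.exp (l * ((t + 1) * b)))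
    filter_upwards with ω
    rw [Real.norm_eq_abs, abs_of_pos (Real.exp_pos _)]
    exact hZbd t ω
  constructor
  · apply supermartingale_nat hZadp hZint
    intro t
    by_cases hdt : d ≤ t
    · -- main case: genuine increment
      have ht1 : d ≤ t + 1 := by omega
      set h : Ω → ℝ := H (t + 1) with hhdef
      set q : Ω → ℝ := fun ω => p a (fun i : Fin d => X (t + 1 - d + (i : ℕ)) ω) with hqdef
      set I : Ω → ℝ := fun ω => if X (t + 1) ω = a then (1 : ℝ) else 0 with hIdef
      set F : Ω → ℝ := fun ω => Z t ω *
        Real.exp (-(l * h ω * q ω) - φ * (h ω ^ 2 * q ω * (1 - q ω))) with hFdef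
      set G : Ω → ℝ := fun ω => Real.exp (l * h ω) - 1 with hGdef
      have hhm : StronglyMeasurable[ℱ t] h := hHmeas (t + 1)
      have hqm : StronglyMeasurable[ℱ t] q := hgmeas (t + 1) ht1
      have hq0 : ∀ ω, 0 ≤ q ω := fun ω => (hq01 (t + 1) ω).1
      have hq1 : ∀ ω, q ω ≤ 1 := fun ω => (hq01 (t + 1) ω).2
      have hFm : StronglyMeasurable[ℱ t] F := by
        apply (hZadp t).mul
        apply Real.continuous_exp.comp_stronglyMeasurable
        exact ((hhm.const_mul l).mul hqm).neg.sub
          ((((hhm.pow 2).mul hqm).mul (stronglyMeasurable_const.sub hqm)).const_mul φ)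
      have hGm : StronglyMeasurable[ℱ t] G :=
        (Real.continuous_exp.comp_stronglyMeasurable (hhm.const_mul l)).sub
          stronglyMeasurable_const
      have hbint : ∀ (f : Ω → ℝ) (C : ℝ), AEStronglyMeasurable f μ → (∀ ω, |f ω| ≤ C) →
          Integrable f μ := fun f C hm hbd =>
        ⟨hm, HasFiniteIntegral.of_bounded (C := C)
          (Filter.Eventually.of_forall fun ω => by simpa using hbd ω)⟩
      have hwbd : ∀ ω, -(l * h ω * q ω) - φ * (h ω ^ 2 * q ω * (1 - q ω)) ≤ l * b := by
        intro ω
        obtain ⟨h1, h2⟩ := abs_le.1 (hHbdd (t + 1) ω)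
        have e1 : 0 ≤ φ * (h ω ^ 2 * q ω * (1 - q ω)) :=
          mul_nonneg hφ0 (mul_nonneg (mul_nonneg (sq_nonneg _) (hq0 ω))
            (by linarith [hq1 ω]))
        have e2 : -(l * h ω * q ω) ≤ l * b := by
          nlinarith [mul_nonneg (mul_nonneg hl.le (show (0:ℝ) ≤ b + h ω by exact_mod_cast by linarith)) (hq0 ω),
            mul_le_mul_of_nonneg_left (hq1 ω) (mul_pos hl hb).le]
        linarith
      have hFpos : ∀ ω, 0 < F ω := fun ω => mul_pos (Real.exp_pos _) (Real.exp_pos _)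
      have hFbd : ∀ ω, |F ω| ≤ Real.exp (l * ((t + 1) * b)) * Real.exp (l * b) := by
        intro ω
        rw [abs_of_pos (hFpos ω)]
        exact mul_le_mul (hZbd t ω) (Real.exp_le_exp.2 (hwbd ω)) (Real.exp_pos _).le
          (Real.exp_pos _).le
      have hGbd : ∀ ω, |G ω| ≤ Real.exp (l * b) + 1 := by
        intro ω
        have h2 : h ω ≤ b := (abs_le.1 (hHbdd (t + 1) ω)).2
        have : Real.exp (l * h ω) ≤ Real.exp (l * b) :=
          Real.exp_le_exp.2 (mul_le_mul_of_nonneg_left h2 hl.le)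
        rw [abs_le]
        constructor <;> simp only [hGdef] <;> nlinarith [Real.exp_pos (l * h ω)]
      have hIbd : ∀ ω, |I ω| ≤ 1 := by
        intro ω; simp only [hIdef]; split_ifs <;> simp
      have hIm : AEStronglyMeasurable I μ :=
        ((hX (t + 1) a).mono (ℱ.le (t + 1))).aestronglyMeasurable
      have hFint : Integrable F μ :=
        hbint F _ ((hFm.mono (ℱ.le t)).aestronglyMeasurable) hFbd
      have hIint : Integrable I μ := hbint I 1 hIm hIbd
      have hFGIint : Integrable ((F * G) * I) μ := by
        apply hbint _ ((Real.exp (l * ((t + 1) * b)) * Real.exp (l * b)) *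
          (Real.exp (l * b) + 1) * 1)
        · exact (((hFm.mul hGm).mono (ℱ.le t)).aestronglyMeasurable).mul hIm
        · intro ω
          simp only [Pi.mul_apply]
          rw [abs_mul, abs_mul]
          have g1 : (0:ℝ) ≤ Real.exp (l * b) + 1 := by positivity
          apply mul_le_mul (mul_le_mul (hFbd ω) (hGbd ω) (abs_nonneg _) (by positivity))
            (hIbd ω) (abs_nonneg _) (by positivity)
      have hZs : Z (t + 1) = F + (F * G) * I := by
        funext ω
        have hM1 : M (t + 1) ω = M t ω + h ω * (I ω - q ω) := by
          rw [hM (t + 1) ω, hM t ω, Finset.sum_range_succ]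
        have hQ1 : QV (t + 1) ω = QV t ω + h ω ^ 2 * q ω * (1 - q ω) := by
          rw [hQV (t + 1) ω, hQV t ω, Finset.sum_range_succ]
        show Real.exp (l * M (t + 1) ω - φ * QV (t + 1) ω) = F ω + F ω * G ω * I ω
        rw [hM1, hQ1]
        by_cases hXa : X (t + 1) ω = a
        · have hIω : I ω = 1 := if_pos hXa
          rw [hIω]
          show _ = Z t ω * Real.exp (-(l * h ω * q ω) - φ * (h ω ^ 2 * q ω * (1 - q ω)))
            + Z t ω * Real.exp (-(l * h ω * q ω) - φ * (h ω ^ 2 * q ω * (1 - q ω)))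
              * (Real.exp (l * h ω) - 1) * 1
          show Real.exp (l * (M t ω + h ω * (1 - q ω))
              - φ * (QV t ω + h ω ^ 2 * q ω * (1 - q ω)))
            = Real.exp (l * M t ω - φ * QV t ω)
              * Real.exp (-(l * h ω * q ω) - φ * (h ω ^ 2 * q ω * (1 - q ω)))
            + Real.exp (l * M t ω - φ * QV t ω)
              * Real.exp (-(l * h ω * q ω) - φ * (h ω ^ 2 * q ω * (1 - q ω)))
              * (Real.exp (l * h ω) - 1) * 1
          have hmerge : Real.exp (l * M t ω - φ * QV t ω)
              * Real.exp (-(l * h ω * q ω) - φ * (h ω ^ 2 * q ω * (1 - q ω)))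
              * Real.exp (l * h ω)
              = Real.exp (l * (M t ω + h ω * (1 - q ω))
                - φ * (QV t ω + h ω ^ 2 * q ω * (1 - q ω))) := by
            rw [← Real.exp_add, ← Real.exp_add]; congr 1; ring
          linear_combination -hmerge
        · have hIω : I ω = 0 := if_neg hXa
          rw [hIω]
          show Real.exp (l * (M t ω + h ω * (0 - q ω))
              - φ * (QV t ω + h ω ^ 2 * q ω * (1 - q ω)))
            = Real.exp (l * M t ω - φ * QV t ω)
              * Real.exp (-(l * h ω * q ω) - φ * (h ω ^ 2 * q ω * (1 - q ω)))
            + Real.exp (l * M t ω - φ * QV t ω)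
              * Real.exp (-(l * h ω * q ω) - φ * (h ω ^ 2 * q ω * (1 - q ω)))
              * (Real.exp (l * h ω) - 1) * 0
          rw [mul_zero, add_zero, ← Real.exp_add]
          congr 1
          ring
      have hcF : μ[F | ℱ t] = F := condExp_of_stronglyMeasurable (ℱ.le t) hFm hFint
      have hcmul : μ[(F * G) * I | ℱ t] =ᵐ[μ] (F * G) * μ[I | ℱ t] :=
        condExp_mul_of_stronglyMeasurable_left (hFm.mul hGm) hFGIint hIint
      have hcI : μ[I | ℱ t] =ᵐ[μ] q := hMarkov (t + 1) ht1 a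
      have hcsplit : μ[Z (t + 1) | ℱ t] =ᵐ[μ] μ[F | ℱ t] + μ[(F * G) * I | ℱ t] := by
        rw [hZs]; exact condExp_add hFint hFGIint _
      have hkey : ∀ ω, F ω + F ω * G ω * q ω ≤ Z t ω := by
        intro ω
        have hber := bernoulli_mgf hb hl (hHbdd (t + 1) ω) (hq0 ω) (hq1 ω)
        rw [← hφ] at hber
        have e1 : F ω + F ω * G ω * q ω
            = Z t ω * (Real.exp (-(l * h ω * q ω)) * (1 + (Real.exp (l * h ω) - 1) * q ω)
              * Real.exp (-(φ * (h ω ^ 2 * q ω * (1 - q ω))))) := by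
          show Z t ω * Real.exp (-(l * h ω * q ω) - φ * (h ω ^ 2 * q ω * (1 - q ω)))
            + Z t ω * Real.exp (-(l * h ω * q ω) - φ * (h ω ^ 2 * q ω * (1 - q ω)))
              * (Real.exp (l * h ω) - 1) * q ω = _
          rw [show -(l * h ω * q ω) - φ * (h ω ^ 2 * q ω * (1 - q ω))
              = -(l * h ω * q ω) + -(φ * (h ω ^ 2 * q ω * (1 - q ω))) by ring,
            Real.exp_add]
          ring
        rw [e1]
        have e2 : Real.exp (-(l * h ω * q ω)) * (1 + (Real.exp (l * h ω) - 1) * q ω)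
              * Real.exp (-(φ * (h ω ^ 2 * q ω * (1 - q ω)))) ≤ 1 := by
          calc Real.exp (-(l * h ω * q ω)) * (1 + (Real.exp (l * h ω) - 1) * q ω)
                * Real.exp (-(φ * (h ω ^ 2 * q ω * (1 - q ω))))
              ≤ Real.exp (φ * (h ω ^ 2 * q ω * (1 - q ω)))
                * Real.exp (-(φ * (h ω ^ 2 * q ω * (1 - q ω)))) :=
                mul_le_mul_of_nonneg_right hber (Real.exp_pos _).le
            _ = 1 := by rw [← Real.exp_add]; simp
        calc Z t ω * _ ≤ Z t ω * 1 :=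
              mul_le_mul_of_nonneg_left e2 (le_of_lt (show 0 < Z t ω from Real.exp_pos _))
          _ = Z t ω := mul_one _
      filter_upwards [hcsplit, hcmul, hcI] with ω h1 h2 h3
      rw [h1, Pi.add_apply, hcF, h2, Pi.mul_apply, Pi.mul_apply, h3]
      exact hkey ω
    · -- degenerate case: increment vanishes
      push_neg at hdt
      have hZeq : Z (t + 1) = Z t := by
        funext ω
        have hM1 : M (t + 1) ω = M t ω := by
          rw [hM (t + 1) ω, hM t ω, Finset.sum_range_succ, hH0 (t + 1) (by omega) ω,
            zero_mul, add_zero]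
        have hQ1 : QV (t + 1) ω = QV t ω := by
          rw [hQV (t + 1) ω, hQV t ω, Finset.sum_range_succ, hH0 (t + 1) (by omega) ω]
          ring
        show Real.exp (l * M (t + 1) ω - φ * QV (t + 1) ω) = _
        rw [hM1, hQ1]
      rw [hZeq, condExp_of_stronglyMeasurable (ℱ.le t) (hZadp t) (hZint t)]
  · intro ω
    have hM0 : M 0 ω = 0 := by
      rw [hM 0 ω, Finset.sum_range_one, hH0 0 (Nat.zero_le d) ω, zero_mul]
    have hQ0 : QV 0 ω = 0 := by
      rw [hQV 0 ω, Finset.sum_range_one, hH0 0 (Nat.zero_le d) ω]; ring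
    rw [hM0, hQ0]; simp
end

section
/- Economical Freedman inequality: for the martingale M = H•M^a with increments bounded by b and any α > 0, v > 0 and t, P(M_t ≥ √(2vα) + αb/3, ⟨M⟩_t ≤ v) ≤ e^{−α} P(⟨M⟩_t > 0). -/
open MeasureTheory Finset

private lemma freedman_exp_core (x : ℝ) (hx0 : 0 ≤ x) (hx3 : x < 3) :
    Real.exp x ≤ 1 + x + 3 * x ^ 2 / (6 - 2 * x) := by
  set F : ℝ → ℝ := fun y => (1 + y + 3 * y ^ 2 / (6 - 2 * y)) * Real.exp (-y) with hF
  have hne : ∀ y ∈ Set.Ico (0:ℝ) 3, (6 - 2 * y) ≠ 0 := by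
    intro y hy; nlinarith [hy.1, hy.2]
  have hderiv : ∀ y ∈ Set.Ioo (0:ℝ) 3,
      HasDerivAt F (2 * y ^ 3 / (6 - 2 * y) ^ 2 * Real.exp (-y)) y := by
    intro y hy
    have h6 : (6 - 2 * y) ≠ 0 := by nlinarith [hy.1, hy.2]
    have h1 : HasDerivAt (fun y : ℝ => 3 * y ^ 2) (3 * (2 * y ^ 1)) y :=
      (hasDerivAt_pow 2 y).const_mul 3
    have h2 : HasDerivAt (fun y : ℝ => 6 - 2 * y) (0 - 2 * 1) y :=
      (hasDerivAt_const y 6).sub ((hasDerivAt_id y).const_mul 2)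
    have hdiv := h1.div h2 h6
    have hG : HasDerivAt (fun y : ℝ => 1 + y + 3 * y ^ 2 / (6 - 2 * y))
        (0 + 1 + (3 * (2 * y ^ 1) * (6 - 2 * y) - 3 * y ^ 2 * (0 - 2 * 1)) / (6 - 2 * y) ^ 2) y :=
      (((hasDerivAt_const y 1).add (hasDerivAt_id y)).add hdiv)
    have hexp : HasDerivAt (fun y : ℝ => Real.exp (-y)) (Real.exp (-y) * (-1)) y :=
      (Real.hasDerivAt_exp (-y)).comp y ((hasDerivAt_id y).neg)
    have := hG.mul hexp
    refine this.congr_deriv ?_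
    field_simp
    ring
  have hmono : MonotoneOn F (Set.Ico (0:ℝ) 3) := by
    apply monotoneOn_of_deriv_nonneg (convex_Ico 0 3)
    · apply ContinuousOn.mul
      · exact (continuousOn_const.add continuousOn_id).add
          ((continuousOn_const.mul (continuousOn_pow 2)).div
            (continuousOn_const.sub (continuousOn_const.mul continuousOn_id)) hne)
      · exact (Real.continuous_exp.comp continuous_neg).continuousOn
    · intro y hy
      rw [interior_Ico] at hy
      exact (hderiv y hy).differentiableAt.differentiableWithinAt
    · intro y hy
      rw [interior_Ico] at hy
      rw [(hderiv y hy).deriv]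
      have h6 : (0:ℝ) < 6 - 2 * y := by nlinarith [hy.1, hy.2]
      have hy0 : (0:ℝ) < y := hy.1
      positivity
  have h01 : F 0 ≤ F x := by
    apply hmono (by constructor <;> norm_num) ⟨hx0, hx3⟩ hx0
  have hF0 : F 0 = 1 := by simp [hF]
  rw [hF0] at h01
  have hexppos : 0 < Real.exp (-x) := Real.exp_pos _
  have : Real.exp x * F x = (1 + x + 3 * x ^ 2 / (6 - 2 * x)) := by
    simp only [hF]
    rw [mul_comm, mul_assoc, ← Real.exp_add]
    simp
  calc Real.exp x = Real.exp x * 1 := by ring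
    _ ≤ Real.exp x * F x := by
        exact mul_le_mul_of_nonneg_left h01 (Real.exp_pos x).le
    _ = _ := this

private lemma freedman_exp_quad (s u : ℝ) (hsu : |s| ≤ u) (hu : u < 3) :
    Real.exp s ≤ 1 + s + s ^ 2 / (2 * (1 - u / 3)) := by
  have hu0 : 0 ≤ u := le_trans (abs_nonneg s) hsu
  have hx0 : 0 ≤ |s| := abs_nonneg s
  have hx3 : |s| < 3 := lt_of_le_of_lt hsu hu
  have hpsi : Real.exp s - s ≤ Real.exp |s| - |s| := by
    rcases le_or_gt 0 s with h | h
    · rw [abs_of_nonneg h]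
    · rw [abs_of_neg h]
      have hs : Real.sinh s ≤ s := le_of_lt (Real.sinh_lt_self_iff.2 h)
      rw [Real.sinh_eq] at hs
      nlinarith
  have hcore := freedman_exp_core |s| hx0 hx3
  have hd1 : (0:ℝ) < 6 - 2 * |s| := by nlinarith
  have hd2 : (0:ℝ) < 2 * (1 - u / 3) := by nlinarith
  have hmono2 : 3 * |s| ^ 2 / (6 - 2 * |s|) ≤ s ^ 2 / (2 * (1 - u / 3)) := by
    rw [div_le_div_iff₀ hd1 hd2]
    have : |s| ^ 2 = s ^ 2 := sq_abs s
    nlinarith [sq_nonneg s, abs_nonneg s, hsu]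
  nlinarith

private lemma freedman_mgf (b lam kap h q : ℝ) (hb : 0 < b) (hl : 0 < lam)
    (hlb : lam * b < 3) (hkap : kap = lam ^ 2 / (2 * (1 - lam * b / 3)))
    (hq0 : 0 ≤ q) (hq1 : q ≤ 1) (hh : |h| ≤ b) :
    q * Real.exp (lam * (h * (1 - q))) + (1 - q) * Real.exp (lam * (-(h * q)))
      ≤ Real.exp (kap * (h ^ 2 * q * (1 - q))) := by
  have habs : |lam * b| = lam * b := abs_of_pos (by positivity)
  have key : ∀ y : ℝ, |y| ≤ b →
      Real.exp (lam * y) ≤ 1 + lam * y + kap * y ^ 2 := by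
    intro y hy
    have h1 : |lam * y| ≤ lam * b := by
      rw [abs_mul, abs_of_pos hl]
      exact mul_le_mul_of_nonneg_left hy hl.le
    have := freedman_exp_quad (lam * y) (lam * b) h1 hlb
    have heq : (lam * y) ^ 2 / (2 * (1 - lam * b / 3)) = kap * y ^ 2 := by
      rw [hkap]; ring
    linarith [this, heq ▸ this]
  have hy1 : |h * (1 - q)| ≤ b := by
    rw [abs_mul]
    calc |h| * |1 - q| ≤ b * 1 := by
          apply mul_le_mul hh _ (abs_nonneg _) hb.le
          rw [abs_of_nonneg (by linarith)]; linarith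
      _ = b := mul_one b
  have hy2 : |-(h * q)| ≤ b := by
    rw [abs_neg, abs_mul]
    calc |h| * |q| ≤ b * 1 := by
          apply mul_le_mul hh _ (abs_nonneg _) hb.le
          rw [abs_of_nonneg hq0]; linarith
      _ = b := mul_one b
  have k1 := key _ hy1
  have k2 := key _ hy2
  have hkap0 : 0 ≤ kap := by
    rw [hkap]
    have : (0:ℝ) < 2 * (1 - lam * b / 3) := by nlinarith
    positivity
  have hfin : q * (1 + lam * (h * (1 - q)) + kap * (h * (1 - q)) ^ 2)
      + (1 - q) * (1 + lam * (-(h * q)) + kap * (-(h * q)) ^ 2)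
      = 1 + kap * (h ^ 2 * q * (1 - q)) := by ring
  have hexp := Real.add_one_le_exp (kap * (h ^ 2 * q * (1 - q)))
  nlinarith [mul_le_mul_of_nonneg_left k1 hq0,
    mul_le_mul_of_nonneg_left k2 (by linarith : (0:ℝ) ≤ 1 - q)]

private lemma freedman_lam (b α v : ℝ) (hb : 0 < b) (hα : 0 < α) (hv : 0 < v) :
    ∃ lam : ℝ, 0 < lam ∧ lam * b < 3 ∧
      α ≤ lam * (Real.sqrt (2 * v * α) + α * b / 3)
          - lam ^ 2 / (2 * (1 - lam * b / 3)) * v := by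
  have h2av : 0 < 2 * α / v := by positivity
  set q := Real.sqrt (2 * α / v) with hqdef
  have hq0 : 0 < q := Real.sqrt_pos.2 h2av
  have hq2 : q ^ 2 = 2 * α / v := Real.sq_sqrt h2av.le
  have hq2' : q ^ 2 * v = 2 * α := by rw [hq2]; field_simp
  have hD : 0 < 1 + q * b / 3 := by positivity
  refine ⟨q / (1 + q * b / 3), by positivity, ?_, ?_⟩
  · rw [div_mul_eq_mul_div, div_lt_iff₀ hD]
    nlinarith
  · have hvq : (v * q) ^ 2 = 2 * v * α := by
      rw [mul_pow, hq2]; field_simp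
    have hsqrt : Real.sqrt (2 * v * α) = v * q := by
      rw [← hvq, Real.sqrt_sq (by positivity)]
    have h13 : 1 - (q / (1 + q * b / 3)) * b / 3 = 1 / (1 + q * b / 3) := by
      field_simp
      ring
    rw [hsqrt, h13]
    have hDne : (1 + q * b / 3) ≠ 0 := hD.ne'
    have key : (q / (1 + q * b / 3)) * (v * q + α * b / 3)
        - (q / (1 + q * b / 3)) ^ 2 / (2 * (1 / (1 + q * b / 3))) * v = α := by
      have e1 : (q / (1 + q * b / 3)) ^ 2 / (2 * (1 / (1 + q * b / 3))) * v
          = q ^ 2 * v / (2 * (1 + q * b / 3)) := by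
        field_simp
      have e2 : (q / (1 + q * b / 3)) * (v * q + α * b / 3)
          = (q ^ 2 * v + q * (α * b) / 3) / (1 + q * b / 3) := by
        field_simp
      rw [e1, e2, hq2']
      field_simp
      ring
    linarith [key.ge]

section Aux

private lemma integrable_of_bdd {Ω : Type*} {m0 : MeasurableSpace Ω} {μ : Measure Ω}
    [IsFiniteMeasure μ] {f : Ω → ℝ} {C : ℝ}
    (hf : StronglyMeasurable f) (hC : ∀ ω, |f ω| ≤ C) : Integrable f μ :=
  ⟨hf.aestronglyMeasurable, HasFiniteIntegral.of_bounded (C := C)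
    (Filter.Eventually.of_forall fun ω => by simpa [Real.norm_eq_abs] using hC ω)⟩

end Aux

set_option maxHeartbeats 2000000 in
theorem stmt14 {Ω : Type*} {m0 : MeasurableSpace Ω} (μ : Measure Ω)
    [IsProbabilityMeasure μ] (ℱ : Filtration ℕ m0)
    {A : Type*} [Fintype A] [DecidableEq A]
    (d : ℕ) (X : ℕ → Ω → A)
    (hX : ∀ t a, StronglyMeasurable[ℱ t] (fun ω => (if X t ω = a then (1 : ℝ) else 0)))
    (p : A → (Fin d → A) → ℝ)
    (hp01 : ∀ a x, 0 ≤ p a x ∧ p a x ≤ 1)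
    (hpsum : ∀ x, ∑ a, p a x = 1)
    (hMarkov : ∀ s, d ≤ s → ∀ a,
      μ[fun ω => (if X s ω = a then (1 : ℝ) else 0) | ℱ (s - 1)]
        =ᵐ[μ] fun ω => p a (fun i => X (s - d + i) ω))
    (b : ℝ) (hb : 0 < b) (H : ℕ → Ω → ℝ)
    (hHmeas : ∀ s, StronglyMeasurable[ℱ (s - 1)] (H s))
    (hHbdd : ∀ s ω, |H s ω| ≤ b)
    (hH0 : ∀ s ≤ d, ∀ ω, H s ω = 0)
    (a : A)
    (M : ℕ → Ω → ℝ)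
    (hM : ∀ t ω, M t ω = ∑ s ∈ Finset.range (t + 1),
      H s ω * ((if X s ω = a then (1 : ℝ) else 0) - p a (fun i => X (s - d + i) ω)))
    (QV : ℕ → Ω → ℝ)
    (hQV : ∀ t ω, QV t ω = ∑ s ∈ Finset.range (t + 1),
      H s ω ^ 2 * p a (fun i => X (s - d + i) ω) * (1 - p a (fun i => X (s - d + i) ω)))
    (α v : ℝ) (hα : 0 < α) (hv : 0 < v) (t : ℕ) :
    μ {ω | Real.sqrt (2 * v * α) + α * b / 3 ≤ M t ω ∧ QV t ω ≤ v}
      ≤ ENNReal.ofReal (Real.exp (-α)) * μ {ω | 0 < QV t ω} := by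
  classical
  obtain ⟨lam, hlam0, hlamb, hlamα⟩ := freedman_lam b α v hb hα hv
  set kap : ℝ := lam ^ 2 / (2 * (1 - lam * b / 3)) with hkapdef
  have hden : (0:ℝ) < 2 * (1 - lam * b / 3) := by nlinarith
  have hkap0 : 0 < kap := by rw [hkapdef]; positivity
  set I : ℕ → Ω → ℝ := fun s ω => if X s ω = a then (1:ℝ) else 0 with hIdef
  set P : ℕ → Ω → ℝ := fun s ω => p a (fun i => X (s - d + i) ω) with hPdef
  set dM : ℕ → Ω → ℝ := fun s ω => H s ω * (I s ω - P s ω) with hdMdef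
  set dQ : ℕ → Ω → ℝ := fun s ω => H s ω ^ 2 * P s ω * (1 - P s ω) with hdQdef
  have hM' : ∀ s ω, M s ω = ∑ r ∈ Finset.range (s+1), dM r ω := hM
  have hQV' : ∀ s ω, QV s ω = ∑ r ∈ Finset.range (s+1), dQ r ω := hQV
  have hP01 : ∀ s ω, 0 ≤ P s ω ∧ P s ω ≤ 1 := fun s ω => hp01 a _
  have hI01 : ∀ s ω, 0 ≤ I s ω ∧ I s ω ≤ 1 := by
    intro s ω
    simp only [hIdef]
    split <;> norm_num
  -- basic bounds
  have hdMbdd : ∀ s ω, |dM s ω| ≤ b := by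
    intro s ω
    simp only [hdMdef]
    rw [abs_mul]
    have h1 : |I s ω - P s ω| ≤ 1 := by
      rw [abs_le]
      constructor
      · linarith [(hI01 s ω).1, (hP01 s ω).2]
      · linarith [(hI01 s ω).2, (hP01 s ω).1]
    calc |H s ω| * |I s ω - P s ω| ≤ b * 1 :=
          mul_le_mul (hHbdd s ω) h1 (abs_nonneg _) hb.le
      _ = b := mul_one b
  have hdQ0 : ∀ s ω, 0 ≤ dQ s ω := by
    intro s ω
    simp only [hdQdef]
    have h1 := (hP01 s ω).1
    have h2 : (0:ℝ) ≤ 1 - P s ω := by linarith [(hP01 s ω).2]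
    positivity
  have hQV0 : ∀ s ω, 0 ≤ QV s ω := by
    intro s ω
    rw [hQV' s ω]
    exact Finset.sum_nonneg fun r _ => hdQ0 r ω
  have hQVmono : ∀ s ω, QV s ω ≤ QV (s+1) ω := by
    intro s ω
    rw [hQV' s ω, hQV' (s+1) ω, Finset.sum_range_succ (fun r => dQ r ω) (s+1)]
    linarith [hdQ0 (s+1) ω]
  have hMbdd : ∀ s ω, |M s ω| ≤ ((s:ℝ)+1) * b := by
    intro s ω
    rw [hM' s ω]
    calc |∑ r ∈ Finset.range (s+1), dM r ω| ≤ ∑ r ∈ Finset.range (s+1), |dM r ω| :=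
          Finset.abs_sum_le_sum_abs _ _
      _ ≤ ∑ _r ∈ Finset.range (s+1), b := Finset.sum_le_sum fun r _ => hdMbdd r ω
      _ = ((s:ℝ)+1) * b := by
          rw [Finset.sum_const, Finset.card_range, nsmul_eq_mul]
          push_cast
          ring
  -- measurability
  have mI : ∀ s, StronglyMeasurable[ℱ s] (I s) := fun s => hX s a
  have mP : ∀ s, d ≤ s → StronglyMeasurable[ℱ (s-1)] (P s) := by
    intro s hds
    have hrepr : P s = fun ω => ∑ x : Fin d → A,
        p a x * ∏ i : Fin d, (if X (s - d + i.1) ω = x i then (1:ℝ) else 0) := by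
      funext ω
      simp only [hPdef]
      rw [Finset.sum_eq_single (fun i : Fin d => X (s - d + i.1) ω)]
      · simp
      · intro x _ hne
        obtain ⟨i, hi⟩ : ∃ i : Fin d, X (s - d + i.1) ω ≠ x i := by
          by_contra hc
          push_neg at hc
          exact hne (funext fun i => (hc i).symm)
        rw [Finset.prod_eq_zero (Finset.mem_univ i) (by simp [hi])]
        ring
      · simp
    rw [hrepr]
    apply Finset.stronglyMeasurable_fun_sum
    intro x _
    apply stronglyMeasurable_const.mul
    apply Finset.stronglyMeasurable_fun_prod
    intro i _
    exact (hX (s - d + i.1) (x i)).mono (ℱ.mono (by omega))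
  have mdQ : ∀ s, StronglyMeasurable[ℱ (s-1)] (dQ s) := by
    intro s
    by_cases hsd : s ≤ d
    · have h0 : dQ s = fun _ => 0 := funext fun ω => by simp [hdQdef, hH0 s hsd ω]
      rw [h0]
      exact stronglyMeasurable_const
    · have hds : d ≤ s := (not_le.1 hsd).le
      exact (((hHmeas s).pow 2).mul (mP s hds)).mul (stronglyMeasurable_const.sub (mP s hds))
  have mdM : ∀ s, StronglyMeasurable[ℱ s] (dM s) := by
    intro s
    by_cases hsd : s ≤ d
    · have h0 : dM s = fun _ => 0 := funext fun ω => by simp [hdMdef, hH0 s hsd ω]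
      rw [h0]
      exact stronglyMeasurable_const
    · have hds : d ≤ s := (not_le.1 hsd).le
      exact ((hHmeas s).mono (ℱ.mono (Nat.sub_le s 1))).mul
        ((mI s).sub ((mP s hds).mono (ℱ.mono (Nat.sub_le s 1))))
  have mM : ∀ s, StronglyMeasurable[ℱ s] (M s) := by
    intro s
    have h0 : M s = fun ω => ∑ r ∈ Finset.range (s+1), dM r ω := funext (hM' s)
    rw [h0]
    apply Finset.stronglyMeasurable_fun_sum
    intro r hr
    exact (mdM r).mono (ℱ.mono (by simp only [Finset.mem_range] at hr; omega))
  have mQV : ∀ s, StronglyMeasurable[ℱ (s-1)] (QV s) := by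
    intro s
    have h0 : QV s = fun ω => ∑ r ∈ Finset.range (s+1), dQ r ω := funext (hQV' s)
    rw [h0]
    apply Finset.stronglyMeasurable_fun_sum
    intro r hr
    exact (mdQ r).mono (ℱ.mono (by simp only [Finset.mem_range] at hr; omega))
  -- the exponential supermartingale
  set Z : ℕ → Ω → ℝ := fun s ω => Real.exp (lam * M s ω - kap * QV s ω) with hZdef
  have mZ : ∀ s, StronglyMeasurable[ℱ s] (Z s) :=
    fun s => Real.continuous_exp.comp_stronglyMeasurable
      ((stronglyMeasurable_const.mul (mM s)).sub
        (stronglyMeasurable_const.mul ((mQV s).mono (ℱ.mono (Nat.sub_le s 1)))))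
  have hZpos : ∀ s ω, 0 < Z s ω := fun s ω => Real.exp_pos _
  have hZbdd : ∀ s ω, |Z s ω| ≤ Real.exp (lam * (((s:ℝ)+1) * b)) := by
    intro s ω
    rw [abs_of_pos (hZpos s ω)]
    apply Real.exp_le_exp.2
    have h1 := (abs_le.1 (hMbdd s ω)).2
    have h2 := hQV0 s ω
    nlinarith
  have intZ : ∀ s, Integrable (Z s) μ :=
    fun s => integrable_of_bdd ((mZ s).mono (ℱ.le s)) (hZbdd s)
  -- one-step conditional bound
  have hstep : ∀ s, μ[fun ω => Real.exp (lam * dM s ω)|ℱ (s-1)]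
      ≤ᵐ[μ] fun ω => Real.exp (kap * dQ s ω) := by
    intro s
    by_cases hsd : s ≤ d
    · have h1 : (fun ω => Real.exp (lam * dM s ω)) = fun _ => (1:ℝ) := by
        funext ω
        simp [hdMdef, hH0 s hsd ω]
      rw [h1, condExp_const (ℱ.le _)]
      refine Filter.Eventually.of_forall fun ω => Real.one_le_exp ?_
      exact mul_nonneg hkap0.le (hdQ0 s ω)
    · have hds : d ≤ s := (not_le.1 hsd).le
      set f : Ω → ℝ := fun ω => Real.exp (-(lam * (H s ω * P s ω))) with hfdef
      set g : Ω → ℝ := fun ω => Real.exp (lam * H s ω) - 1 with hgdef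
      have hmf : StronglyMeasurable[ℱ (s-1)] f :=
        Real.continuous_exp.comp_stronglyMeasurable
          ((stronglyMeasurable_const.mul ((hHmeas s).mul (mP s hds))).neg)
      have hmg : StronglyMeasurable[ℱ (s-1)] g :=
        (Real.continuous_exp.comp_stronglyMeasurable
          (stronglyMeasurable_const.mul (hHmeas s))).sub stronglyMeasurable_const
      have hfbdd : ∀ ω, |f ω| ≤ Real.exp (lam * b) := by
        intro ω
        simp only [hfdef]
        rw [abs_of_pos (Real.exp_pos _)]
        apply Real.exp_le_exp.2
        have h1 := (abs_le.1 (hHbdd s ω)).1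
        have h2 := hP01 s ω
        have h3 : -b ≤ H s ω * P s ω := by nlinarith
        nlinarith [mul_le_mul_of_nonneg_left h3 hlam0.le]
      have hgbdd : ∀ ω, |g ω| ≤ Real.exp (lam * b) + 1 := by
        intro ω
        simp only [hgdef]
        have h1 : Real.exp (lam * H s ω) ≤ Real.exp (lam * b) := by
          apply Real.exp_le_exp.2
          have := (abs_le.1 (hHbdd s ω)).2
          nlinarith
        have h2 : 0 < Real.exp (lam * H s ω) := Real.exp_pos _
        have h3 : (0:ℝ) < Real.exp (lam * b) := Real.exp_pos _
        rw [abs_le]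
        constructor <;> nlinarith
      have hint_f : Integrable f μ := integrable_of_bdd (hmf.mono (ℱ.le _)) hfbdd
      have hint_I : Integrable (I s) μ :=
        integrable_of_bdd (C := 1) ((mI s).mono (ℱ.le _))
          (fun ω => by rw [abs_le]; constructor <;> linarith [(hI01 s ω).1, (hI01 s ω).2])
      have hint_fgI : Integrable ((fun ω => f ω * g ω) * I s) μ := by
        apply integrable_of_bdd (C := Real.exp (lam * b) * (Real.exp (lam * b) + 1) * 1)
        · exact ((hmf.mul hmg).mono (ℱ.le _)).mul ((mI s).mono (ℱ.le _))
        · intro ω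
          simp only [Pi.mul_apply]
          rw [abs_mul, abs_mul]
          apply mul_le_mul
          · apply mul_le_mul (hfbdd ω) (hgbdd ω) (abs_nonneg _) (Real.exp_pos _).le
          · rw [abs_le]; constructor <;> linarith [(hI01 s ω).1, (hI01 s ω).2]
          · exact abs_nonneg _
          · positivity
      have hsplit : (fun ω => Real.exp (lam * dM s ω))
          = f + (fun ω => f ω * g ω) * I s := by
        funext ω
        simp only [Pi.add_apply, Pi.mul_apply]
        by_cases hxa : X s ω = a
        · have hI1 : I s ω = 1 := by simp [hIdef, hxa]
          rw [show lam * dM s ω = -(lam * (H s ω * P s ω)) + lam * H s ω from by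
            simp only [hdMdef]; rw [hI1]; ring, Real.exp_add]
          simp only [hfdef, hgdef]
          rw [hI1]
          ring
        · have hI0 : I s ω = 0 := by simp [hIdef, hxa]
          rw [show lam * dM s ω = -(lam * (H s ω * P s ω)) from by
            simp only [hdMdef]; rw [hI0]; ring]
          simp only [hfdef, hgdef]
          rw [hI0]
          ring
      have hMk : μ[I s|ℱ (s-1)] =ᵐ[μ] P s := hMarkov s hds a
      have hcond1 : μ[fun ω => Real.exp (lam * dM s ω)|ℱ (s-1)]
          =ᵐ[μ] fun ω => f ω + f ω * g ω * P s ω := by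
        rw [hsplit]
        calc μ[f + (fun ω => f ω * g ω) * I s|ℱ (s-1)]
            =ᵐ[μ] μ[f|ℱ (s-1)] + μ[(fun ω => f ω * g ω) * I s|ℱ (s-1)] :=
              condExp_add hint_f hint_fgI _
          _ =ᵐ[μ] f + (fun ω => f ω * g ω) * μ[I s|ℱ (s-1)] := by
              apply Filter.EventuallyEq.add
              · rw [condExp_of_stronglyMeasurable (ℱ.le _) hmf hint_f]
              · exact condExp_mul_of_stronglyMeasurable_left (hmf.mul hmg) hint_fgI hint_I
          _ =ᵐ[μ] fun ω => f ω + f ω * g ω * P s ω := by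
              filter_upwards [hMk] with ω hω
              simp only [Pi.add_apply, Pi.mul_apply, hω]
      filter_upwards [hcond1] with ω hω
      rw [hω]
      have hmgf := freedman_mgf b lam kap (H s ω) (P s ω) hb hlam0 hlamb hkapdef
        (hP01 s ω).1 (hP01 s ω).2 (hHbdd s ω)
      have heq : f ω + f ω * g ω * P s ω
          = P s ω * Real.exp (lam * (H s ω * (1 - P s ω)))
            + (1 - P s ω) * Real.exp (lam * (-(H s ω * P s ω))) := by
        rw [show lam * (H s ω * (1 - P s ω)) = lam * H s ω + -(lam * (H s ω * P s ω)) from by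
          ring, Real.exp_add,
          show lam * -(H s ω * P s ω) = -(lam * (H s ω * P s ω)) from by ring]
        simp only [hfdef, hgdef]
        ring
      rw [heq]
      calc P s ω * Real.exp (lam * (H s ω * (1 - P s ω)))
            + (1 - P s ω) * Real.exp (lam * (-(H s ω * P s ω)))
          ≤ Real.exp (kap * (H s ω ^ 2 * P s ω * (1 - P s ω))) := hmgf
        _ = Real.exp (kap * dQ s ω) := by simp only [hdQdef]
  -- increments vanish a.e. where the conditional variance vanishes
  have hdMz : ∀ s, ∀ᵐ ω ∂μ, dQ s ω = 0 → dM s ω = 0 := by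
    intro s
    by_cases hsd : s ≤ d
    · exact Filter.Eventually.of_forall fun ω _ => by simp [hdMdef, hH0 s hsd ω]
    · have hds : d ≤ s := (not_le.1 hsd).le
      have hMk : μ[I s|ℱ (s-1)] =ᵐ[μ] P s := hMarkov s hds a
      have hint_I : Integrable (I s) μ :=
        integrable_of_bdd (C := 1) ((mI s).mono (ℱ.le _))
          (fun ω => by rw [abs_le]; constructor <;> linarith [(hI01 s ω).1, (hI01 s ω).2])
      have hD0m' : MeasurableSet[ℱ (s-1)] {ω | P s ω = 0} :=
        (mP s hds).measurable (measurableSet_singleton 0)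
      have hD0m : MeasurableSet {ω | P s ω = 0} := ℱ.le _ _ hD0m'
      have hI0 : ∀ᵐ ω ∂μ, ω ∈ {ω | P s ω = 0} → I s ω = 0 := by
        have h1 : ∫ ω in {ω | P s ω = 0}, I s ω ∂μ = 0 := by
          rw [← setIntegral_condExp (ℱ.le (s-1)) hint_I hD0m']
          rw [setIntegral_congr_ae hD0m (g := fun _ => (0:ℝ))
            (by filter_upwards [hMk] with ω hω hmem; rw [hω]; exact hmem)]
          simp
        have h2 : I s =ᵐ[μ.restrict {ω | P s ω = 0}] 0 := by
          refine (integral_eq_zero_iff_of_nonneg ?_ hint_I.restrict).1 h1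
          exact fun ω => (hI01 s ω).1
        have h3 := (ae_restrict_iff' hD0m).1 h2
        filter_upwards [h3] with ω hω hmem
        exact hω hmem
      have hD1m' : MeasurableSet[ℱ (s-1)] {ω | P s ω = 1} :=
        (mP s hds).measurable (measurableSet_singleton 1)
      have hD1m : MeasurableSet {ω | P s ω = 1} := ℱ.le _ _ hD1m'
      have hI1 : ∀ᵐ ω ∂μ, ω ∈ {ω | P s ω = 1} → I s ω = 1 := by
        have h0 : ∫ ω in {ω | P s ω = 1}, I s ω ∂μ = (μ {ω | P s ω = 1}).toReal := by
          rw [← setIntegral_condExp (ℱ.le (s-1)) hint_I hD1m']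
          rw [setIntegral_congr_ae hD1m (g := fun _ => (1:ℝ))
            (by filter_upwards [hMk] with ω hω hmem; rw [hω]; exact hmem)]
          rw [setIntegral_const, measureReal_def, smul_eq_mul, mul_one]
        have h1 : ∫ ω in {ω | P s ω = 1}, (1 - I s ω) ∂μ = 0 := by
          rw [integral_sub (integrable_const 1) hint_I.restrict, h0]
          simp [Measure.restrict_apply_univ, measureReal_def]
        have h2 : (fun ω => 1 - I s ω) =ᵐ[μ.restrict {ω | P s ω = 1}] 0 := by
          refine (integral_eq_zero_iff_of_nonneg ?_
            ((integrable_const 1).sub hint_I.restrict)).1 h1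
          refine Pi.le_def.mpr fun ω => ?_
          simp only [Pi.zero_apply, Pi.sub_apply]
          linarith [(hI01 s ω).2]
        have h3 := (ae_restrict_iff' hD1m).1 h2
        filter_upwards [h3] with ω hω hmem
        have := hω hmem
        simp only [Pi.zero_apply] at this
        linarith
      filter_upwards [hI0, hI1] with ω h0 h1 hq
      simp only [hdMdef]
      simp only [hdQdef] at hq
      rcases mul_eq_zero.1 hq with h | hP1
      · rcases mul_eq_zero.1 h with hH2 | hP0
        · rw [pow_eq_zero_iff two_ne_zero] at hH2
          rw [hH2]; ring
        · rw [h0 hP0, hP0]; ring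
      · have hP1' : P s ω = 1 := by linarith
        rw [h1 hP1', hP1']; ring
  -- M vanishes a.e. where QV vanishes
  have hMz : ∀ s, ∀ᵐ ω ∂μ, QV s ω = 0 → M s ω = 0 := by
    intro s
    induction s with
    | zero =>
      refine Filter.Eventually.of_forall fun ω _ => ?_
      rw [hM' 0 ω, Finset.sum_range_one]
      simp [hdMdef, hH0 0 (Nat.zero_le d) ω]
    | succ s ih =>
      filter_upwards [ih, hdMz (s+1)] with ω h1 h2 hq
      rw [hQV' (s+1) ω, Finset.sum_range_succ (fun r => dQ r ω) (s+1), ← hQV' s ω] at hq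
      have hq1 : QV s ω = 0 := by
        have := hQV0 s ω
        have := hdQ0 (s+1) ω
        linarith
      have hq2 : dQ (s+1) ω = 0 := by
        have := hQV0 s ω
        have := hdQ0 (s+1) ω
        linarith
      rw [hM' (s+1) ω, Finset.sum_range_succ (fun r => dM r ω) (s+1), ← hM' s ω,
        h1 hq1, h2 hq2, add_zero]
  -- the sets where QV is positive
  have mG : ∀ s, MeasurableSet[ℱ (s-1)] {ω | 0 < QV s ω} :=
    fun s => measurableSet_lt measurable_const (mQV s).measurable
  have mG0 : ∀ s, MeasurableSet {ω | 0 < QV s ω} := fun s => ℱ.le _ _ (mG s)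
  have hGsub : ∀ s, {ω | 0 < QV s ω} ⊆ {ω | 0 < QV (s+1) ω} :=
    fun s ω hω => lt_of_lt_of_le hω (hQVmono s ω)
  -- main supermartingale induction
  have hind : ∀ s, ∫ ω in {ω | 0 < QV s ω}, Z s ω ∂μ + (μ {ω | 0 < QV s ω}ᶜ).toReal ≤ 1 := by
    intro s
    induction s with
    | zero =>
      have hQ0 : ∀ ω, QV 0 ω = 0 := by
        intro ω
        rw [hQV' 0 ω, Finset.sum_range_one]
        simp [hdQdef, hH0 0 (Nat.zero_le d) ω]
      have hempty : {ω | 0 < QV 0 ω} = (∅ : Set Ω) := by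
        ext ω
        simp [hQ0 ω]
      rw [hempty, Measure.restrict_empty, integral_zero_measure, Set.compl_empty, measure_univ]
      simp
    | succ s ih =>
      have hstep' := hstep (s+1)
      simp only [Nat.add_sub_cancel] at hstep'
      have hZsucc : ∀ ω, Z (s+1) ω
          = Z s ω * Real.exp (-(kap * dQ (s+1) ω)) * Real.exp (lam * dM (s+1) ω) := by
        intro ω
        simp only [hZdef]
        rw [← Real.exp_add, ← Real.exp_add]
        congr 1
        rw [hM' (s+1) ω, hQV' (s+1) ω, Finset.sum_range_succ (fun r => dM r ω) (s+1),
          Finset.sum_range_succ (fun r => dQ r ω) (s+1), ← hM' s ω, ← hQV' s ω]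
        ring
      have hprod : (fun ω => Z s ω * Real.exp (-(kap * dQ (s+1) ω)))
          * (fun ω => Real.exp (lam * dM (s+1) ω)) = Z (s+1) :=
        funext fun ω => (hZsucc ω).symm
      have hΦmeas : StronglyMeasurable[ℱ s] (fun ω => Z s ω * Real.exp (-(kap * dQ (s+1) ω))) :=
        (mZ s).mul (Real.continuous_exp.comp_stronglyMeasurable
          ((stronglyMeasurable_const.mul (mdQ (s+1))).neg))
      have hint_E : Integrable (fun ω => Real.exp (lam * dM (s+1) ω)) μ := by
        apply integrable_of_bdd (C := Real.exp (lam * b))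
        · exact Real.continuous_exp.comp_stronglyMeasurable
            (stronglyMeasurable_const.mul ((mdM (s+1)).mono (ℱ.le _)))
        · intro ω
          rw [abs_of_pos (Real.exp_pos _)]
          apply Real.exp_le_exp.2
          have := (abs_le.1 (hdMbdd (s+1) ω)).2
          nlinarith
      have hint_prod : Integrable ((fun ω => Z s ω * Real.exp (-(kap * dQ (s+1) ω)))
          * (fun ω => Real.exp (lam * dM (s+1) ω))) μ := by
        rw [hprod]
        exact intZ (s+1)
      have hpull := condExp_mul_of_stronglyMeasurable_left hΦmeas hint_prod hint_E
      have hcondZ : μ[Z (s+1)|ℱ s] ≤ᵐ[μ] Z s := by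
        rw [← hprod]
        filter_upwards [hpull, hstep'] with ω h1 h2
        rw [h1]
        simp only [Pi.mul_apply]
        have hpos : (0:ℝ) < Z s ω * Real.exp (-(kap * dQ (s+1) ω)) := by
          have := hZpos s ω
          positivity
        calc Z s ω * Real.exp (-(kap * dQ (s+1) ω))
              * (μ[fun ω => Real.exp (lam * dM (s+1) ω)|ℱ s]) ω
            ≤ Z s ω * Real.exp (-(kap * dQ (s+1) ω)) * Real.exp (kap * dQ (s+1) ω) :=
              mul_le_mul_of_nonneg_left h2 hpos.le
          _ = Z s ω := by
              rw [mul_assoc, ← Real.exp_add, neg_add_cancel, Real.exp_zero, mul_one]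
      have key1 : ∫ ω in {ω | 0 < QV (s+1) ω}, Z (s+1) ω ∂μ
          ≤ ∫ ω in {ω | 0 < QV (s+1) ω}, Z s ω ∂μ := by
        rw [← setIntegral_condExp (ℱ.le s) (intZ (s+1)) (mG (s+1))]
        exact setIntegral_mono_ae integrable_condExp.integrableOn (intZ s).integrableOn hcondZ
      have hdiffm : MeasurableSet ({ω | 0 < QV (s+1) ω} \ {ω | 0 < QV s ω}) :=
        (mG0 (s+1)).diff (mG0 s)
      have key2 : ∫ ω in {ω | 0 < QV (s+1) ω}, Z s ω ∂μ
          = ∫ ω in {ω | 0 < QV s ω}, Z s ω ∂μ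
            + ∫ ω in {ω | 0 < QV (s+1) ω} \ {ω | 0 < QV s ω}, Z s ω ∂μ := by
        rw [← setIntegral_union Set.disjoint_sdiff_right hdiffm
          (intZ s).integrableOn (intZ s).integrableOn,
          Set.union_diff_cancel (hGsub s)]
      have heq1 : ∀ᵐ ω ∂μ, ω ∈ {ω | 0 < QV (s+1) ω} \ {ω | 0 < QV s ω} → Z s ω = 1 := by
        filter_upwards [hMz s] with ω hω hmem
        have hq : QV s ω = 0 := le_antisymm (not_lt.1 hmem.2) (hQV0 s ω)
        simp only [hZdef]
        rw [hq, hω hq]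
        simp
      have key3 : ∫ ω in {ω | 0 < QV (s+1) ω} \ {ω | 0 < QV s ω}, Z s ω ∂μ
          = (μ ({ω | 0 < QV (s+1) ω} \ {ω | 0 < QV s ω})).toReal := by
        rw [setIntegral_congr_ae hdiffm (g := fun _ => (1:ℝ)) heq1,
          setIntegral_const, measureReal_def, smul_eq_mul, mul_one]
      have key4 : (μ ({ω | 0 < QV (s+1) ω} \ {ω | 0 < QV s ω})).toReal
          + (μ {ω | 0 < QV (s+1) ω}ᶜ).toReal = (μ {ω | 0 < QV s ω}ᶜ).toReal := by
        have hseteq : ({ω | 0 < QV (s+1) ω} \ {ω | 0 < QV s ω}) ∪ {ω | 0 < QV (s+1) ω}ᶜ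
            = {ω | 0 < QV s ω}ᶜ := by
          ext ω
          have h3 : 0 < QV s ω → 0 < QV (s+1) ω := fun h => hGsub s h
          simp only [Set.mem_union, Set.mem_diff, Set.mem_compl_iff, Set.mem_setOf_eq]
          by_cases h1 : 0 < QV s ω <;> by_cases h2 : 0 < QV (s+1) ω <;> tauto
        rw [← ENNReal.toReal_add (measure_ne_top μ _) (measure_ne_top μ _),
          ← measure_union (disjoint_compl_right.mono_left Set.diff_subset)
            (mG0 (s+1)).compl, hseteq]
      linarith [key1, key2, key3, key4, ih]
  -- conclusion
  set c : ℝ := Real.sqrt (2 * v * α) + α * b / 3 with hcdef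
  have hc0 : 0 < c := by
    have h1 : 0 ≤ Real.sqrt (2 * v * α) := Real.sqrt_nonneg _
    have h2 : 0 < α * b / 3 := by positivity
    rw [hcdef]
    linarith
  set E : Set Ω := {ω | c ≤ M t ω ∧ QV t ω ≤ v} with hEdef
  have mMt : Measurable (M t) := ((mM t).mono (ℱ.le t)).measurable
  have mQVt : Measurable (QV t) := ((mQV t).mono (ℱ.le _)).measurable
  have mE : MeasurableSet E :=
    (measurableSet_le measurable_const mMt).inter (measurableSet_le mQVt measurable_const)
  have mGt : MeasurableSet {ω | 0 < QV t ω} := mG0 t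
  have hnull : μ (E ∩ {ω | 0 < QV t ω}ᶜ) = 0 := by
    have hsub : E ∩ {ω | 0 < QV t ω}ᶜ ⊆ {ω | ¬ (QV t ω = 0 → M t ω = 0)} := by
      intro ω hω
      have h1 : c ≤ M t ω := hω.1.1
      have h2 : ¬ 0 < QV t ω := hω.2
      have h3 : QV t ω = 0 := le_antisymm (not_lt.1 h2) (hQV0 t ω)
      intro himp
      have h4 := himp h3
      linarith
    exact measure_mono_null hsub (ae_iff.1 (hMz t))
  have hEsplit : μ E ≤ μ (E ∩ {ω | 0 < QV t ω}) := by
    calc μ E = μ ((E ∩ {ω | 0 < QV t ω}) ∪ (E ∩ {ω | 0 < QV t ω}ᶜ)) := by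
          rw [Set.inter_union_compl]
      _ ≤ μ (E ∩ {ω | 0 < QV t ω}) + μ (E ∩ {ω | 0 < QV t ω}ᶜ) := measure_union_le _ _
      _ = μ (E ∩ {ω | 0 < QV t ω}) := by rw [hnull, add_zero]
  have hZt : ∀ ω ∈ E, Real.exp α ≤ Z t ω := by
    intro ω hω
    simp only [hZdef]
    apply Real.exp_le_exp.2
    have h1 : c ≤ M t ω := hω.1
    have h2 : QV t ω ≤ v := hω.2
    nlinarith [hlamα]
  have hmain : Real.exp α * (μ (E ∩ {ω | 0 < QV t ω})).toReal ≤ (μ {ω | 0 < QV t ω}).toReal := by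
    have hIntEG : ∫ ω in E ∩ {ω | 0 < QV t ω}, Z t ω ∂μ ≤ ∫ ω in {ω | 0 < QV t ω}, Z t ω ∂μ :=
      setIntegral_mono_set (intZ t).integrableOn
        (Filter.Eventually.of_forall fun ω => (hZpos t ω).le)
        (HasSubset.Subset.eventuallyLE Set.inter_subset_right)
    have hConstEG : Real.exp α * (μ (E ∩ {ω | 0 < QV t ω})).toReal
        ≤ ∫ ω in E ∩ {ω | 0 < QV t ω}, Z t ω ∂μ := by
      have h1 : ∫ _ω in E ∩ {ω | 0 < QV t ω}, Real.exp α ∂μ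
          = (μ (E ∩ {ω | 0 < QV t ω})).toReal * Real.exp α := by
        rw [setIntegral_const, measureReal_def, smul_eq_mul]
      have h2 : ∫ _ω in E ∩ {ω | 0 < QV t ω}, Real.exp α ∂μ
          ≤ ∫ ω in E ∩ {ω | 0 < QV t ω}, Z t ω ∂μ := by
        apply setIntegral_mono_on (integrable_const _).integrableOn (intZ t).integrableOn
          (mE.inter mGt)
        intro ω hω
        exact hZt ω hω.1
      linarith
    have hGbound : ∫ ω in {ω | 0 < QV t ω}, Z t ω ∂μ ≤ (μ {ω | 0 < QV t ω}).toReal := by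
      have h3 := hind t
      have h4 : (μ {ω | 0 < QV t ω}ᶜ).toReal = 1 - (μ {ω | 0 < QV t ω}).toReal := by
        rw [measure_compl mGt (measure_ne_top μ _), measure_univ,
          ENNReal.toReal_sub_of_le prob_le_one ENNReal.one_ne_top]
        simp
      linarith
    linarith
  have hfinal : (μ (E ∩ {ω | 0 < QV t ω})).toReal
      ≤ Real.exp (-α) * (μ {ω | 0 < QV t ω}).toReal := by
    have hepos : (0:ℝ) < Real.exp α := Real.exp_pos α
    rw [Real.exp_neg, inv_mul_eq_div, le_div_iff₀ hepos]
    nlinarith [hmain]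
  calc μ E ≤ μ (E ∩ {ω | 0 < QV t ω}) := hEsplit
    _ = ENNReal.ofReal ((μ (E ∩ {ω | 0 < QV t ω})).toReal) :=
        (ENNReal.ofReal_toReal (measure_ne_top μ _)).symm
    _ ≤ ENNReal.ofReal (Real.exp (-α) * (μ {ω | 0 < QV t ω}).toReal) :=
        ENNReal.ofReal_le_ofReal hfinal
    _ = ENNReal.ofReal (Real.exp (-α)) * ENNReal.ofReal ((μ {ω | 0 < QV t ω}).toReal) :=
        ENNReal.ofReal_mul (Real.exp_pos _).le
    _ = ENNReal.ofReal (Real.exp (-α)) * μ {ω | 0 < QV t ω} := by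
        rw [ENNReal.ofReal_toReal (measure_ne_top μ _)]
end

section
/- Minimax lower bound for lag selection: with A = {0,1}, d = βn for β ∈ (0,1), if δ² ≤ ((1−λ)/(2n))(log(nβ)/2 − log 2), then inf over all lag estimators Λ̂_n based on n samples of sup over MTD models of order d with δ_min ≥ δ of P(Λ̂_n ≠ Λ) is at least 1/4. -/
open Finset

/-- Value of a binary trajectory at an absolute time, `false` off range. -/
def getB {n : ℕ} (x : Fin n → Bool) (m : ℕ) : Bool :=
  if h : m < n then x ⟨m, h⟩ else false

/-- Transition kernel (probability of symbol `1`) of a binary MTD model of order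
`d` with mixture weights `lam0, lam` and component kernels `p0, pj`. -/
noncomputable def mtdK {d : ℕ} (lam0 : ℝ) (lam : Fin d → ℝ) (p0 : ℝ)
    (pj : Fin d → Bool → ℝ) : (Fin d → Bool) → ℝ :=
  fun x => lam0 * p0 + ∑ j, lam j * pj j (x j)

/-- Oscillation of lag `j` of a binary MTD model. -/
noncomputable def osc {d : ℕ} (lam : Fin d → ℝ) (pj : Fin d → Bool → ℝ)
    (j : Fin d) : ℝ :=
  lam j * |pj j true - pj j false|

open Classical in
/-- The set of relevant lags of a binary MTD model. -/
noncomputable def relevantLags {d : ℕ} (lam : Fin d → ℝ) (pj : Fin d → Bool → ℝ) :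
    Finset (Fin d) :=
  Finset.univ.filter (fun j => 0 < osc lam pj j)

/-- `q` is the law on `X_{1:n}` of a stationary Markov chain of order `d` with
transition kernel `K` (probability of symbol `1` given the previous `d`
symbols): it is a probability vector satisfying the Markov factorization through
`K` and stationarity of `d`-windows. -/
def IsStationaryLaw (n d : ℕ) (K : (Fin d → Bool) → ℝ)
    (q : (Fin n → Bool) → ℝ) : Prop :=
  (∀ x, 0 ≤ q x) ∧ (∑ x, q x = 1) ∧
  (∀ x, q x =
    (∑ y ∈ Finset.univ.filter (fun y => ∀ i < d, getB y i = getB x i), q y) *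
    ∏ t ∈ Finset.Ico d n,
      (if getB x t then K (fun i => getB x (t - d + i))
        else 1 - K (fun i => getB x (t - d + i)))) ∧
  (∀ t, t + d ≤ n → ∀ v : Fin d → Bool,
    (∑ x ∈ Finset.univ.filter (fun x => ∀ i : Fin d, getB x (t + i) = v i), q x) =
    (∑ x ∈ Finset.univ.filter (fun x => ∀ i : Fin d, getB x i.val = v i), q x))


namespace MTD18

lemma getB_eq {n : ℕ} (x : Fin n → Bool) {m : ℕ} (h : m < n) : getB x m = x ⟨m, h⟩ :=
  dif_pos h

noncomputable def cF (δ : ℝ) (a b : Bool) : ℝ := if a = b then (1+δ)/2 else (1-δ)/2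

noncomputable def FFg (g : ℕ) (cc : Bool → Bool → ℝ) (w : ℕ → Bool) (t : ℕ) : ℝ :=
  if t < g then 1/2 else cc (w t) (w (t - g))

lemma FFg_congr {g : ℕ} {cc : Bool → Bool → ℝ} {w w' : ℕ → Bool} {t : ℕ}
    (h : ∀ s, s ≤ t → w s = w' s) : FFg g cc w t = FFg g cc w' t := by
  unfold FFg
  split
  · rfl
  · rw [h t le_rfl, h (t-g) (Nat.sub_le _ _)]

noncomputable def qq (n : ℕ) (δ : ℝ) (g : ℕ) (x : Fin n → Bool) : ℝ :=
  ∏ t ∈ Finset.range n, FFg g (cF δ) (getB x) t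

lemma sum_split (n : ℕ) (P : (Fin n → Bool) → Prop) [DecidablePred P] (s : ℕ)
    (f : (Fin n → Bool) → ℝ) :
    ∑ x ∈ univ.filter P, f x
      = ∑ x ∈ univ.filter (fun x => P x ∧ getB x s = true), f x
      + ∑ x ∈ univ.filter (fun x => P x ∧ getB x s = false), f x := by
  classical
  rw [← Finset.sum_filter_add_sum_filter_not (univ.filter P) (fun x => getB x s = true) f]
  congr 1
  · rw [Finset.filter_filter]
  · rw [Finset.filter_filter]
    refine Finset.sum_congr ?_ fun _ _ => rfl
    apply Finset.filter_congr
    intro x _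
    simp [Bool.not_eq_true]

lemma RidentGen (g m : ℕ) (hg : 1 ≤ g) (cc : Bool → Bool → ℝ) (σ : ℝ)
    (hcol : ∀ b, cc true b + cc false b = σ) (w : ℕ → Bool) :
    (∏ i ∈ range (m+1), FFg g cc (Function.update w m true) i)
      + (∏ i ∈ range (m+1), FFg g cc (Function.update w m false) i)
    = (∏ i ∈ range m, FFg g cc w i) * (if m < g then 1 else σ) := by
  have hsplit : ∀ b : Bool, ∏ i ∈ range (m+1), FFg g cc (Function.update w m b) i
      = (∏ i ∈ range m, FFg g cc w i) * (if m < g then (1:ℝ)/2 else cc b (w (m-g))) := by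
    intro b
    rw [Finset.prod_range_succ]
    congr 1
    · apply Finset.prod_congr rfl
      intro t ht
      apply FFg_congr
      intro s hs
      apply Function.update_of_ne
      have := mem_range.mp ht; omega
    · unfold FFg
      split
      · rfl
      · rw [Function.update_self, Function.update_of_ne (by omega)]
  rw [hsplit true, hsplit false]
  have hv : (if m < g then (1:ℝ)/2 else cc true (w (m-g)))
      + (if m < g then (1:ℝ)/2 else cc false (w (m-g)))
      = (if m < g then (1:ℝ) else σ) := by
    split
    · norm_num
    · exact hcol _
  rw [← hv]
  ring

open Classical in
lemma Sgen (n g : ℕ) (hg : 1 ≤ g) (cc : Bool → Bool → ℝ) (σ : ℝ)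
    (hcol : ∀ b, cc true b + cc false b = σ) :
    ∀ k m (w : ℕ → Bool), m + k = n →
      ∑ x ∈ univ.filter (fun x : Fin n → Bool => ∀ i < m, getB x i = w i),
          ∏ t ∈ Finset.range n, FFg g cc (getB x) t
        = (∏ t ∈ Finset.range m, FFg g cc w t)
          * ∏ t ∈ Finset.Ico m n, (if t < g then (1:ℝ) else σ) := by
  intro k
  induction k with
  | zero =>
    intro m w h
    obtain rfl : n = m := by omega
    have hfil : univ.filter (fun x : Fin n → Bool => ∀ i < n, getB x i = w i)
        = {fun i : Fin n => w i.val} := by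
      ext y
      simp only [mem_filter, mem_univ, true_and, mem_singleton]
      constructor
      · intro hy
        funext i
        have := hy i.val i.isLt
        rwa [getB_eq y i.isLt] at this
      · intro hy i hi
        subst hy
        rw [getB_eq _ hi]
    rw [hfil, Finset.sum_singleton, Finset.Ico_self, Finset.prod_empty, mul_one]
    apply Finset.prod_congr rfl
    intro t ht
    apply FFg_congr
    intro s hs
    have hsn : s < n := lt_of_le_of_lt hs (mem_range.mp ht)
    rw [getB_eq _ hsn]
  | succ k ih =>
    intro m w h
    have hmn : m < n := by omega
    rw [sum_split n (fun x : Fin n → Bool => ∀ i < m, getB x i = w i) m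
      (fun x => ∏ t ∈ Finset.range n, FFg g cc (getB x) t)]
    have conv : ∀ b : Bool,
        ∑ x ∈ univ.filter (fun x : Fin n → Bool =>
            (∀ i < m, getB x i = w i) ∧ getB x m = b),
            ∏ t ∈ Finset.range n, FFg g cc (getB x) t
        = (∏ t ∈ Finset.range (m+1), FFg g cc (Function.update w m b) t)
          * ∏ t ∈ Finset.Ico (m+1) n, (if t < g then (1:ℝ) else σ) := by
      intro b
      have hfil : (univ.filter fun x : Fin n → Bool => (∀ i < m, getB x i = w i) ∧ getB x m = b)
          = univ.filter (fun x : Fin n → Bool => ∀ i < m+1, getB x i = Function.update w m b i) := by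
        apply Finset.filter_congr
        intro x _
        constructor
        · rintro ⟨h1, h2⟩ i hi
          rcases Nat.lt_succ_iff_lt_or_eq.mp hi with hi' | rfl
          · rw [Function.update_of_ne (by omega)]
            exact h1 i hi'
          · rwa [Function.update_self]
        · intro h1
          constructor
          · intro i hi
            have := h1 i (by omega)
            rwa [Function.update_of_ne (by omega)] at this
          · have := h1 m (by omega)
            rwa [Function.update_self] at this
      rw [hfil]
      exact ih (m+1) _ (by omega)
    rw [conv true, conv false,
      Finset.prod_eq_prod_Ico_succ_bot hmn (fun t => if t < g then (1:ℝ) else σ),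
      ← add_mul, RidentGen g m hg cc σ hcol w]
    ring

def consB (b : Bool) (w : ℕ → Bool) : ℕ → Bool := fun i => if i = 0 then b else w (i-1)

lemma Lident (g M : ℕ) (hg : 1 ≤ g) (cc : Bool → Bool → ℝ)
    (hrow : ∀ a, cc a true + cc a false = 1) (w : ℕ → Bool) :
    (∏ i ∈ range (M+1), FFg g cc (consB true w) i)
      + (∏ i ∈ range (M+1), FFg g cc (consB false w) i)
    = ∏ i ∈ range M, FFg g cc w i := by
  have h0 : ∀ b : Bool, FFg g cc (consB b w) 0 = 1/2 := by
    intro b; unfold FFg; rw [if_pos (by omega)]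
  rw [Finset.prod_range_succ' (fun i => FFg g cc (consB true w) i) M,
      Finset.prod_range_succ' (fun i => FFg g cc (consB false w) i) M, h0, h0]
  by_cases hcase : g ≤ M
  · have hmem : g - 1 ∈ range M := mem_range.mpr (by omega)
    have hoth : ∀ b : Bool, ∀ i ∈ (range M).erase (g-1),
        FFg g cc (consB b w) (i+1) = FFg g cc w i := by
      intro b i hi
      have hne : i ≠ g - 1 := (Finset.mem_erase.mp hi).1
      unfold FFg consB
      by_cases h1 : i + 1 < g
      · rw [if_pos h1, if_pos (by omega)]
      · rw [if_neg h1, if_neg (by omega), if_neg (by omega), if_neg (by omega)]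
        have e1 : i + 1 - 1 = i := by omega
        have e2 : i + 1 - g - 1 = i - g := by omega
        rw [e1, e2]
    have hat : ∀ b : Bool, FFg g cc (consB b w) ((g-1)+1) = cc (w (g-1)) b := by
      intro b
      have e : g - 1 + 1 = g := by omega
      rw [e]
      unfold FFg consB
      rw [if_neg (by omega), if_neg (by omega), Nat.sub_self, if_pos rfl]
    rw [← Finset.mul_prod_erase (range M) (fun i => FFg g cc (consB true w) (i+1)) hmem,
        ← Finset.mul_prod_erase (range M) (fun i => FFg g cc (consB false w) (i+1)) hmem,
        ← Finset.mul_prod_erase (range M) (fun i => FFg g cc w i) hmem]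
    rw [Finset.prod_congr rfl (hoth true), Finset.prod_congr rfl (hoth false), hat, hat]
    have hw : FFg g cc w (g-1) = 1/2 := by unfold FFg; rw [if_pos (by omega)]
    rw [hw]
    linear_combination (∏ x ∈ (range M).erase (g-1), FFg g cc w x) * (1/2) * hrow (w (g-1))
  · have hall : ∀ b : Bool, ∀ i ∈ range M, FFg g cc (consB b w) (i+1) = 1/2 := by
      intro b i hi
      unfold FFg
      rw [if_pos (by have := mem_range.mp hi; omega)]
    have hall2 : ∀ i ∈ range M, FFg g cc w i = 1/2 := by
      intro i hi
      unfold FFg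
      rw [if_pos (by have := mem_range.mp hi; omega)]
    rw [Finset.prod_congr rfl (hall true), Finset.prod_congr rfl (hall false),
        Finset.prod_congr rfl hall2, Finset.prod_const]
    ring

open Classical in
lemma Ufull (n g : ℕ) (hg : 1 ≤ g) (cc : Bool → Bool → ℝ)
    (hcol : ∀ b, cc true b + cc false b = 1)
    (hrow : ∀ a, cc a true + cc a false = 1) :
    ∀ t m (w : ℕ → Bool), t + m = n →
      ∑ x ∈ univ.filter (fun x : Fin n → Bool => ∀ i < m, getB x (t + i) = w i),
          ∏ s ∈ Finset.range n, FFg g cc (getB x) s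
        = ∏ s ∈ Finset.range m, FFg g cc w s := by
  intro t
  induction t with
  | zero =>
    intro m w h
    have hfil : (univ.filter fun x : Fin n → Bool => ∀ i < m, getB x (0 + i) = w i)
        = univ.filter (fun x : Fin n → Bool => ∀ i < m, getB x i = w i) := by
      apply Finset.filter_congr
      intro x _
      constructor
      · intro h1 i hi; have := h1 i hi; rwa [Nat.zero_add] at this
      · intro h1 i hi; rw [Nat.zero_add]; exact h1 i hi
    rw [hfil, Sgen n g hg cc 1 hcol 0 m w (by omega)]
    simp
  | succ t ih =>
    intro m w h
    rw [sum_split n (fun x : Fin n → Bool => ∀ i < m, getB x (t + 1 + i) = w i) t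
      (fun x => ∏ s ∈ Finset.range n, FFg g cc (getB x) s)]
    have conv : ∀ b : Bool,
        ∑ x ∈ univ.filter (fun x : Fin n → Bool =>
            (∀ i < m, getB x (t + 1 + i) = w i) ∧ getB x t = b),
            ∏ s ∈ Finset.range n, FFg g cc (getB x) s
        = ∏ s ∈ Finset.range (m+1), FFg g cc (consB b w) s := by
      intro b
      have hfil : (univ.filter fun x : Fin n → Bool =>
            (∀ i < m, getB x (t + 1 + i) = w i) ∧ getB x t = b)
          = univ.filter (fun x : Fin n → Bool => ∀ i < m+1, getB x (t + i) = consB b w i) := by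
        apply Finset.filter_congr
        intro x _
        constructor
        · rintro ⟨h1, h2⟩ i hi
          match i with
          | 0 => simpa [consB] using h2
          | (j+1) =>
            have e : t + (j + 1) = t + 1 + j := by omega
            rw [e]
            simpa [consB] using h1 j (by omega)
        · intro h1
          constructor
          · intro i hi
            have := h1 (i+1) (by omega)
            have e : t + (i + 1) = t + 1 + i := by omega
            rw [e] at this
            simpa [consB] using this
          · simpa [consB] using h1 0 (by omega)
      rw [hfil]
      exact ih (m+1) (consB b w) (by omega)
    rw [conv true, conv false]
    exact Lident g m hg cc hrow w

open Classical in
lemma Ugen (n g : ℕ) (hg : 1 ≤ g) (cc : Bool → Bool → ℝ)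
    (hcol : ∀ b, cc true b + cc false b = 1)
    (hrow : ∀ a, cc a true + cc a false = 1) :
    ∀ k t m (w : ℕ → Bool), t + m + k = n →
      ∑ x ∈ univ.filter (fun x : Fin n → Bool => ∀ i < m, getB x (t + i) = w i),
          ∏ s ∈ Finset.range n, FFg g cc (getB x) s
        = ∏ s ∈ Finset.range m, FFg g cc w s := by
  intro k
  induction k with
  | zero => intro t m w h; exact Ufull n g hg cc hcol hrow t m w (by omega)
  | succ k ih =>
    intro t m w h
    rw [sum_split n (fun x : Fin n → Bool => ∀ i < m, getB x (t + i) = w i) (t + m)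
      (fun x => ∏ s ∈ Finset.range n, FFg g cc (getB x) s)]
    have conv : ∀ b : Bool,
        ∑ x ∈ univ.filter (fun x : Fin n → Bool =>
            (∀ i < m, getB x (t + i) = w i) ∧ getB x (t + m) = b),
            ∏ s ∈ Finset.range n, FFg g cc (getB x) s
        = ∏ s ∈ Finset.range (m+1), FFg g cc (Function.update w m b) s := by
      intro b
      have hfil : (univ.filter fun x : Fin n → Bool =>
            (∀ i < m, getB x (t + i) = w i) ∧ getB x (t + m) = b)
          = univ.filter (fun x : Fin n → Bool =>
              ∀ i < m+1, getB x (t + i) = Function.update w m b i) := by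
        apply Finset.filter_congr
        intro x _
        constructor
        · rintro ⟨h1, h2⟩ i hi
          rcases Nat.lt_succ_iff_lt_or_eq.mp hi with hi' | rfl
          · rw [Function.update_of_ne (by omega)]
            exact h1 i hi'
          · rwa [Function.update_self]
        · intro h1
          constructor
          · intro i hi
            have := h1 i (by omega)
            rwa [Function.update_of_ne (by omega)] at this
          · have := h1 m (by omega)
            rwa [Function.update_self] at this
      rw [hfil]
      exact ih t (m+1) (Function.update w m b) (by omega)
    rw [conv true, conv false, RidentGen g m hg cc 1 hcol w]
    split <;> ring

lemma cF_col (δ : ℝ) : ∀ b, cF δ true b + cF δ false b = 1 := by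
  intro b; cases b <;> simp [cF] <;> ring

lemma cF_row (δ : ℝ) : ∀ a, cF δ a true + cF δ a false = 1 := by
  intro a; cases a <;> simp [cF] <;> ring

lemma cF2_col (δ : ℝ) : ∀ b, 2 * (cF δ true b)^2 + 2 * (cF δ false b)^2 = 1 + δ^2 := by
  intro b; cases b <;> simp [cF] <;> ring

lemma secmom (n g : ℕ) (hg : 1 ≤ g) (δ : ℝ) :
    ∑ x : Fin n → Bool, (2:ℝ)^n * (qq n δ g x)^2 ≤ (1 + δ^2)^n := by
  classical
  have hptw : ∀ x : Fin n → Bool, (2:ℝ)^n * (qq n δ g x)^2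
      = ∏ t ∈ Finset.range n, FFg g (fun a b => 2 * (cF δ a b)^2) (getB x) t := by
    intro x
    have h1 : ∏ t ∈ Finset.range n, FFg g (fun a b => 2 * (cF δ a b)^2) (getB x) t
        = ∏ t ∈ Finset.range n, (2 * (FFg g (cF δ) (getB x) t)^2) := by
      apply Finset.prod_congr rfl
      intro t _
      unfold FFg
      split
      · norm_num
      · rfl
    rw [h1, Finset.prod_mul_distrib, Finset.prod_const, Finset.card_range, Finset.prod_pow]
    rfl
  have hle : ∑ x ∈ (univ : Finset (Fin n → Bool)),
      ∏ t ∈ Finset.range n, FFg g (fun a b => 2 * (cF δ a b)^2) (getB x) t ≤ (1 + δ^2)^n := by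
    have hS := Sgen n g hg (fun a b => 2 * (cF δ a b)^2) (1 + δ^2) (cF2_col δ) n 0
      (fun _ => false) (by omega)
    rw [Finset.filter_true_of_mem (fun x _ => by omega)] at hS
    rw [hS, Finset.range_zero, Finset.prod_empty, one_mul]
    calc (∏ t ∈ Finset.Ico 0 n, if t < g then (1:ℝ) else 1 + δ^2)
        ≤ ∏ t ∈ Finset.Ico 0 n, (1 + δ^2) := by
          apply Finset.prod_le_prod
          · intro t _; split <;> positivity
          · intro t _; split
            · nlinarith [sq_nonneg δ]
            · exact le_refl _
      _ = (1 + δ^2)^n := by rw [Finset.prod_const, Nat.card_Ico, Nat.sub_zero]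
  calc ∑ x : Fin n → Bool, (2:ℝ)^n * (qq n δ g x)^2
      = ∑ x ∈ (univ : Finset (Fin n → Bool)),
          ∏ t ∈ Finset.range n, FFg g (fun a b => 2 * (cF δ a b)^2) (getB x) t :=
        Finset.sum_congr rfl (fun x _ => hptw x)
    _ ≤ (1 + δ^2)^n := hle

open Classical in
lemma exists_good (n d : ℕ) (δ : ℝ) (hd0 : 0 < d)
    (hK : ((1:ℝ) + δ^2)^n ≤ 9/16 * d)
    (est : (Fin n → Bool) → Finset (Fin d)) :
    ∃ j : Fin d,
      ∑ x ∈ univ.filter (fun x => est x = ({j} : Finset (Fin d))), qq n δ (d - j.val) x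
        ≤ 3/4 := by
  by_contra hcon
  push_neg at hcon
  classical
  set A : Fin d → Finset (Fin n → Bool) :=
    fun j => univ.filter (fun x => est x = ({j} : Finset (Fin d))) with hA
  have hKpos : (0:ℝ) < ((1:ℝ) + δ^2)^n := by positivity
  have h2pos : (0:ℝ) < (2:ℝ)^n := by positivity
  -- second moment bound
  have hsm : ∀ j : Fin d, ∑ x : Fin n → Bool, (qq n δ (d - j.val) x)^2
      ≤ ((1:ℝ) + δ^2)^n / 2^n := by
    intro j
    have hg : 1 ≤ d - j.val := by have := j.isLt; omega
    have := secmom n (d - j.val) hg δ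
    rw [← Finset.mul_sum] at this
    rw [div_eq_inv_mul, ← mul_le_mul_iff_right₀ h2pos, ← mul_assoc, mul_inv_cancel₀ (ne_of_gt h2pos),
      one_mul]
    exact this
  -- each A j must be large
  have hcard : ∀ j : Fin d, (2:ℝ)^n < ((A j).card : ℝ) * d := by
    intro j
    have hCS := sq_sum_le_card_mul_sum_sq (s := A j) (f := qq n δ (d - j.val))
    have hsub : ∑ x ∈ A j, (qq n δ (d - j.val) x)^2
        ≤ ((1:ℝ) + δ^2)^n / 2^n := by
      refine le_trans ?_ (hsm j)
      exact Finset.sum_le_sum_of_subset_of_nonneg (Finset.subset_univ _)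
        (fun x _ _ => sq_nonneg _)
    have hcj := hcon j
    have hsq : (9:ℝ)/16 < (∑ x ∈ A j, qq n δ (d - j.val) x)^2 := by nlinarith
    have hcge : (0:ℝ) ≤ ((A j).card : ℝ) := Nat.cast_nonneg _
    have h1 : (9:ℝ)/16 * 2^n < ((A j).card : ℝ) * ((1:ℝ) + δ^2)^n := by
      have := le_trans hCS (mul_le_mul_of_nonneg_left hsub hcge)
      calc (9:ℝ)/16 * 2^n < (∑ x ∈ A j, qq n δ (d - j.val) x)^2 * 2^n := by nlinarith
        _ ≤ ((A j).card : ℝ) * (((1:ℝ) + δ^2)^n / 2^n) * 2^n := by nlinarith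
        _ = ((A j).card : ℝ) * ((1:ℝ) + δ^2)^n := by field_simp
    have h2 : ((A j).card : ℝ) * ((1:ℝ) + δ^2)^n ≤ ((A j).card : ℝ) * (9/16 * d) :=
      mul_le_mul_of_nonneg_left hK hcge
    nlinarith
  -- disjointness and counting
  have hdisj : ∀ j ∈ (univ : Finset (Fin d)), ∀ j' ∈ (univ : Finset (Fin d)), j ≠ j' →
      Disjoint (A j) (A j') := by
    intro j _ j' _ hne
    rw [Finset.disjoint_left]
    intro x hx hx'
    rw [hA] at hx hx'
    simp only [Finset.mem_filter] at hx hx'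
    apply hne
    have := hx.2.symm.trans hx'.2
    exact Finset.singleton_injective this
  have hsumcard : ∑ j : Fin d, (A j).card ≤ 2^n := by
    rw [← Finset.card_biUnion hdisj]
    calc ((univ : Finset (Fin d)).biUnion A).card
        ≤ (univ : Finset (Fin n → Bool)).card := Finset.card_le_card (Finset.subset_univ _)
      _ = 2^n := by simp [Finset.card_univ]
  have hsumcard' : (∑ j : Fin d, ((A j).card : ℝ)) ≤ (2:ℝ)^n := by
    have : ((∑ j : Fin d, (A j).card : ℕ) : ℝ) ≤ ((2^n : ℕ) : ℝ) := Nat.cast_le.mpr hsumcard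
    push_cast at this
    exact this
  have hdpos : (0:ℝ) < d := by exact_mod_cast hd0
  have hbig : (d:ℝ) * 2^n < (∑ j : Fin d, ((A j).card : ℝ)) * d := by
    calc (d:ℝ) * 2^n = ∑ _j : Fin d, (2:ℝ)^n := by
          rw [Finset.sum_const, Finset.card_univ, Fintype.card_fin, nsmul_eq_mul]
      _ < ∑ j : Fin d, ((A j).card : ℝ) * d := by
          apply Finset.sum_lt_sum_of_nonempty
          · exact Finset.univ_nonempty_iff.mpr ⟨⟨0, hd0⟩⟩
          · intro j _; exact hcard j
      _ = (∑ j : Fin d, ((A j).card : ℝ)) * d := by rw [Finset.sum_mul]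
  nlinarith

lemma numerics (β : ℝ) (hβ : 0 < β) (hβ1 : β < 1)
    (n d : ℕ) (hn : 0 < n) (hdn : (d : ℝ) = β * n) (hd : d < n)
    (lam : ℝ) (hlam : 0 < lam) (hlam1 : lam < 1)
    (δ : ℝ) (hδpos : 0 < δ)
    (hδ : δ ^ 2 ≤ ((1 - lam) / (2 * n)) * (Real.log (n * β) / 2 - Real.log 2)) :
    0 < d ∧ δ ≤ 1 ∧ ((1:ℝ) + δ^2)^n ≤ 9/16 * d := by
  have hn' : (0:ℝ) < n := by exact_mod_cast hn
  have hlogd : Real.log ((n:ℝ) * β) = Real.log d := by rw [hdn, mul_comm]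
  have hC : (0:ℝ) < (1 - lam) / (2 * n) := by
    apply div_pos <;> nlinarith
  have hB : (0:ℝ) < Real.log ((n:ℝ) * β) / 2 - Real.log 2 := by
    by_contra hc
    push_neg at hc
    have h1 : ((1 - lam) / (2 * n)) * (Real.log ((n:ℝ) * β) / 2 - Real.log 2) ≤ 0 :=
      mul_nonpos_of_nonneg_of_nonpos (le_of_lt hC) hc
    nlinarith [pow_pos hδpos 2]
  have hdpos' : (0:ℝ) < d := by rw [hdn]; positivity
  have hd0 : 0 < d := by exact_mod_cast hdpos'
  have l2pos : (0:ℝ) < Real.log 2 := Real.log_pos (by norm_num)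
  -- 4 < d
  have hlog4 : Real.log 4 = 2 * Real.log 2 := by
    rw [show (4:ℝ) = 2^2 by norm_num, Real.log_pow]
    push_cast; ring
  have hd4 : (4:ℝ) < d := by
    rw [hlogd] at hB
    by_contra hc
    push_neg at hc
    have hll : Real.log (d:ℝ) ≤ Real.log 4 := Real.log_le_log hdpos' hc
    rw [hlog4] at hll
    linarith
  -- n δ² bound
  have hnd : (n:ℝ) * δ^2 ≤ (1/2) * (Real.log d / 2 - Real.log 2) := by
    have h1 : (n:ℝ) * δ^2 ≤ (n:ℝ) * (((1 - lam) / (2 * n)) * (Real.log ((n:ℝ)*β) / 2 - Real.log 2)) :=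
      mul_le_mul_of_nonneg_left hδ (le_of_lt hn')
    have h2 : (n:ℝ) * (((1 - lam) / (2 * n)) * (Real.log ((n:ℝ)*β) / 2 - Real.log 2))
        = ((1 - lam) / 2) * (Real.log ((n:ℝ)*β) / 2 - Real.log 2) := by
      field_simp
    rw [h2, hlogd] at h1
    have h3 : ((1 - lam) / 2) * (Real.log d / 2 - Real.log 2)
        ≤ (1/2) * (Real.log d / 2 - Real.log 2) := by
      apply mul_le_mul_of_nonneg_right _ (by rw [hlogd] at hB; linarith)
      linarith
    linarith
  -- δ ≤ 1
  have hlogdle : Real.log d ≤ (d:ℝ) - 1 := Real.log_le_sub_one_of_pos hdpos'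
  have hdltn : (d:ℝ) < n := by exact_mod_cast hd
  have hsq : δ^2 ≤ 1/4 := by
    have : (n:ℝ) * δ^2 ≤ (n:ℝ)/4 := by nlinarith
    nlinarith
  have hδ1 : δ ≤ 1 := by nlinarith
  -- main exponential inequality
  have hlog9 : Real.log 9 = 2 * Real.log 3 := by
    rw [show (9:ℝ) = 3^2 by norm_num, Real.log_pow]; push_cast; ring
  have hlog16 : Real.log 16 = 4 * Real.log 2 := by
    rw [show (16:ℝ) = 2^4 by norm_num, Real.log_pow]; push_cast; ring
  have hlog8 : Real.log 8 = 3 * Real.log 2 := by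
    rw [show (8:ℝ) = 2^3 by norm_num, Real.log_pow]; push_cast; ring
  have h89 : Real.log 8 ≤ Real.log 9 := by
    apply Real.log_le_log (by norm_num) (by norm_num)
  have h4d' : Real.log 4 ≤ Real.log d := Real.log_le_log (by norm_num) (le_of_lt hd4)
  have hmain : (n:ℝ) * Real.log (1 + δ^2) ≤ Real.log (9/16 * d) := by
    have hlx : Real.log (1 + δ^2) ≤ δ^2 := by
      have := Real.log_le_sub_one_of_pos (show (0:ℝ) < 1 + δ^2 by positivity)
      linarith
    have h1 : (n:ℝ) * Real.log (1 + δ^2) ≤ (n:ℝ) * δ^2 :=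
      mul_le_mul_of_nonneg_left hlx (le_of_lt hn')
    have h2 : Real.log (9/16 * d) = Real.log 9 - Real.log 16 + Real.log d := by
      rw [Real.log_mul (by norm_num) (ne_of_gt hdpos'), Real.log_div (by norm_num) (by norm_num)]
    rw [h2, hlog9, hlog16]
    rw [hlog4] at h4d'
    rw [hlog8, hlog9] at h89
    linarith
  constructor
  · exact hd0
  constructor
  · exact hδ1
  · have e1 : ((1:ℝ) + δ^2)^n = Real.exp ((n:ℝ) * Real.log (1 + δ^2)) := by
      rw [Real.exp_nat_mul, Real.exp_log (by positivity)]
    have e2 : (9:ℝ)/16 * d = Real.exp (Real.log (9/16 * d)) := by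
      rw [Real.exp_log (by positivity)]
    rw [e1, e2]
    exact Real.exp_le_exp.mpr hmain

noncomputable def lamvD (d : ℕ) (j : Fin d) : Fin d → ℝ := fun k => if k = j then 1 else 0

noncomputable def pjD (d : ℕ) (δ : ℝ) (j : Fin d) : Fin d → Bool → ℝ :=
  fun k b => if k = j then (if b then (1+δ)/2 else (1-δ)/2) else 1/2

lemma mtdK_eq (d : ℕ) (δ : ℝ) (j : Fin d) (y : Fin d → Bool) :
    mtdK 0 (lamvD d j) (1/2) (pjD d δ j) y = if y j then (1+δ)/2 else (1-δ)/2 := by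
  unfold mtdK lamvD pjD
  simp only [ite_mul, one_mul, zero_mul, Finset.sum_ite_eq', Finset.mem_univ, if_true,
    zero_mul, zero_add, if_pos rfl]

lemma osc_eq (d : ℕ) (δ : ℝ) (j : Fin d) (hδpos : 0 < δ) :
    osc (lamvD d j) (pjD d δ j) j = δ := by
  unfold osc lamvD pjD
  simp only [if_pos rfl, one_mul, if_true, Bool.false_eq_true, if_false]
  rw [show (1+δ)/2 - (1-δ)/2 = δ by ring, abs_of_pos hδpos]

lemma relevant_eq (d : ℕ) (δ : ℝ) (j : Fin d) (hδpos : 0 < δ) :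
    relevantLags (lamvD d j) (pjD d δ j) = {j} := by
  unfold relevantLags
  ext k
  simp only [Finset.mem_filter, Finset.mem_univ, true_and, Finset.mem_singleton]
  constructor
  · intro hk
    by_contra hne
    have : osc (lamvD d j) (pjD d δ j) k = 0 := by
      unfold osc lamvD
      rw [if_neg hne, zero_mul]
    rw [this] at hk
    exact lt_irrefl 0 hk
  · rintro rfl
    rw [osc_eq _ _ _ hδpos]
    exact hδpos

open Classical in
lemma stationary (n d : ℕ) (δ : ℝ) (j : Fin d) (hdn : d < n)
    (hδ0 : 0 ≤ δ) (hδ1 : δ ≤ 1) :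
    IsStationaryLaw n d (mtdK 0 (lamvD d j) (1/2) (pjD d δ j)) (qq n δ (d - j.val)) := by
  classical
  set g := d - j.val with hgdef
  have hg : 1 ≤ g := by have := j.isLt; omega
  have hgd : g ≤ d := by omega
  refine ⟨?_, ?_, ?_, ?_⟩
  · -- nonneg
    intro x
    refine Finset.prod_nonneg fun t _ => ?_
    unfold FFg
    split
    · norm_num
    · unfold cF
      split <;> linarith
  · -- normalization
    have hU := Ugen n g hg (cF δ) (cF_col δ) (cF_row δ) n 0 0 (fun _ => false) (by omega)
    rw [Finset.filter_true_of_mem (fun x _ => by omega)] at hU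
    simpa [qq] using hU
  · -- factorization
    intro x
    have hmarg := Ugen n g hg (cF δ) (cF_col δ) (cF_row δ) (n - d) 0 d
      (fun i => getB x i) (by omega)
    have hfil : (univ.filter fun y : Fin n → Bool => ∀ i < d, getB y i = getB x i)
        = univ.filter (fun y : Fin n → Bool => ∀ i < d, getB y (0 + i) = getB x i) := by
      apply Finset.filter_congr
      intro y _
      constructor
      · intro h1 i hi; rw [Nat.zero_add]; exact h1 i hi
      · intro h1 i hi; have := h1 i hi; rwa [Nat.zero_add] at this
    simp only [qq]
    rw [hfil, hmarg, ← Finset.prod_range_mul_prod_Ico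
      (fun t => FFg g (cF δ) (getB x) t) (le_of_lt hdn)]
    congr 1
    apply Finset.prod_congr rfl
    intro t ht
    obtain ⟨htd, htn⟩ := Finset.mem_Ico.mp ht
    have hidx : t - d + j.val = t - g := by have := j.isLt; omega
    have hker : mtdK 0 (lamvD d j) (1/2) (pjD d δ j) (fun i => getB x (t - d + ↑i))
        = if getB x (t - g) then (1+δ)/2 else (1-δ)/2 := by
      rw [mtdK_eq, hidx]
    rw [hker]
    unfold FFg
    rw [if_neg (by omega)]
    unfold cF
    cases hxt : getB x t <;> cases hxg : getB x (t - g) <;> simp <;> ring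
  · -- stationarity
    intro t ht v
    set w : ℕ → Bool := fun i => if h : i < d then v ⟨i, h⟩ else false with hw
    have h1 := Ugen n g hg (cF δ) (cF_col δ) (cF_row δ) (n - t - d) t d w (by omega)
    have h2 := Ugen n g hg (cF δ) (cF_col δ) (cF_row δ) (n - d) 0 d w (by omega)
    have hwv : ∀ (i : ℕ) (hi : i < d), w i = v ⟨i, hi⟩ := by
      intro i hi
      simp only [hw]
      rw [dif_pos hi]
    have hfilL : (univ.filter fun x : Fin n → Bool => ∀ i : Fin d, getB x (t + ↑i) = v i)
        = univ.filter (fun x : Fin n → Bool => ∀ i < d, getB x (t + i) = w i) := by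
      apply Finset.filter_congr
      intro x _
      constructor
      · intro hh i hi
        rw [hwv i hi]
        exact hh ⟨i, hi⟩
      · intro hh i
        have := hh i.val i.isLt
        rwa [hwv _ i.isLt] at this
    have hfilR : (univ.filter fun x : Fin n → Bool => ∀ i : Fin d, getB x i.val = v i)
        = univ.filter (fun x : Fin n → Bool => ∀ i < d, getB x (0 + i) = w i) := by
      apply Finset.filter_congr
      intro x _
      constructor
      · intro hh i hi
        rw [Nat.zero_add, hwv i hi]
        exact hh ⟨i, hi⟩
      · intro hh i
        have := hh i.val i.isLt
        rwa [Nat.zero_add, hwv _ i.isLt] at this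
    simp only [qq]
    rw [hfilL, hfilR, h1, h2]

end MTD18

open Classical in
/- Minimax lower bound for lag selection: with `A = {0,1}`, `d = βn` for
`β ∈ (0,1)`, if `δ² ≤ ((1−λ)/(2n))(log(nβ)/2 − log 2)`, then for every lag
estimator `est` based on `n` samples there is a binary MTD model of order `d`
with all relevant-lag oscillations at least `δ` whose stationary sample law puts
probability at least `1/4` on the estimation-error event `{est ≠ Λ}`. -/
theorem stmt18 (β : ℝ) (hβ : 0 < β) (hβ1 : β < 1)
    (n d : ℕ) (hn : 0 < n) (hdn : (d : ℝ) = β * n) (hd : d < n)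
    (lam : ℝ) (hlam : 0 < lam) (hlam1 : lam < 1)
    (δ : ℝ) (hδpos : 0 < δ)
    (hδ : δ ^ 2 ≤ ((1 - lam) / (2 * n)) * (Real.log (n * β) / 2 - Real.log 2))
    (est : (Fin n → Bool) → Finset (Fin d)) :
    ∃ (lam0 : ℝ) (lamv : Fin d → ℝ) (p0 : ℝ) (pj : Fin d → Bool → ℝ)
      (q : (Fin n → Bool) → ℝ),
      0 ≤ lam0 ∧ (∀ j, 0 ≤ lamv j) ∧ lam0 + ∑ j, lamv j = 1 ∧
      0 ≤ p0 ∧ p0 ≤ 1 ∧ (∀ j bb, 0 ≤ pj j bb ∧ pj j bb ≤ 1) ∧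
      IsStationaryLaw n d (mtdK lam0 lamv p0 pj) q ∧
      (relevantLags lamv pj).Nonempty ∧
      (∀ j ∈ relevantLags lamv pj, δ ≤ osc lamv pj j) ∧
      (1 / 4 : ℝ) ≤
        ∑ x ∈ Finset.univ.filter (fun x => est x ≠ relevantLags lamv pj), q x := by
  classical
  obtain ⟨hd0, hδ1, hK⟩ := MTD18.numerics β hβ hβ1 n d hn hdn hd lam hlam hlam1 δ hδpos hδ
  obtain ⟨j, hj⟩ := MTD18.exists_good n d δ hd0 hK est
  refine ⟨0, MTD18.lamvD d j, 1/2, MTD18.pjD d δ j, MTD18.qq n δ (d - j.val),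
    le_refl 0, ?_, ?_, by norm_num, by norm_num, ?_, ?_, ?_, ?_, ?_⟩
  · intro k
    unfold MTD18.lamvD
    split <;> norm_num
  · simp [MTD18.lamvD]
  · intro k b
    unfold MTD18.pjD
    constructor <;> split_ifs <;> linarith
  · exact MTD18.stationary n d δ j hd (le_of_lt hδpos) hδ1
  · rw [MTD18.relevant_eq d δ j hδpos]
    exact ⟨j, Finset.mem_singleton_self j⟩
  · intro k hk
    rw [MTD18.relevant_eq d δ j hδpos, Finset.mem_singleton] at hk
    subst hk
    rw [MTD18.osc_eq _ _ _ hδpos]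
  · rw [MTD18.relevant_eq d δ j hδpos]
    have hnorm : ∑ x, MTD18.qq n δ (d - j.val) x = 1 :=
      (MTD18.stationary n d δ j hd (le_of_lt hδpos) hδ1).2.1
    have hsplit := Finset.sum_filter_add_sum_filter_not (univ : Finset (Fin n → Bool))
      (fun x => est x = ({j} : Finset (Fin d))) (MTD18.qq n δ (d - j.val))
    have hne : (univ.filter (fun x => est x ≠ ({j} : Finset (Fin d))))
        = (univ.filter (fun x => ¬ est x = ({j} : Finset (Fin d)))) := by
      apply Finset.filter_congr
      intro x _
      exact Iff.rfl
    rw [hne]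
    linarith
end
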